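/- arXiv:1511.06568 — 2 statements merged into one kernel-verified Lean document; each statement's English description precedes it below -/
import Mathlib

section
/- Let S be a set of vertices of Q_n of size s with s ≥ 2n, and let d = ⌈n²/(2s − n − 2)⌉. Then there exists a set D ⊆ [n] with |D| = d such that |S ∩ V(Q_D(u))| ≤ d + 1 for every u ∈ {0,1}^{n−d}. -/
abbrev Vtx (n : ℕ) := Fin n → Bool

def cube (n : ℕ) : SimpleGraph (Vtx n) where
  Adj u v := hammingDist u v = 1
  symm := ⟨fun u v h => by rwa [hammingDist_comm]⟩
  loopless := ⟨fun u h => by simp [hammingDist_self] at h⟩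

def IsMatchingOn {V : Type*} (G : SimpleGraph V) (M : Finset (Sym2 V)) : Prop :=
  (∀ e ∈ M, e ∈ G.edgeSet) ∧
  ∀ e ∈ M, ∀ f ∈ M, e ≠ f → ∀ v : V, v ∈ e → v ∉ f

def mVerts {V : Type*} (M : Finset (Sym2 V)) : Set V := {v | ∃ e ∈ M, v ∈ e}

def flipAt {n : ℕ} (v : Vtx n) (d : Fin n) : Vtx n := Function.update v d (!(v d))

def subcubeVerts {n k : ℕ} (D : Finset (Fin n)) (h : Dᶜ.card = k)
    (u : Fin k → Bool) : Set (Vtx n) :=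
  {v | ∀ i : Fin k, v ((Dᶜ.orderIsoOfFin h i : Fin n)) = u i}


open Finset

section CW
variable {α : Type*} [DecidableEq α] [LinearOrder α]

private lemma sum_mul_sum_inv (s : Finset α) (f : α → ℚ) (hf : ∀ a ∈ s, 0 < f a) :
    (s.card : ℚ)^2 ≤ (∑ a ∈ s, f a) * (∑ a ∈ s, (f a)⁻¹) := by
  classical
  induction s using Finset.induction with
  | empty => simp
  | insert _ _ hx ih =>
    rename_i a s
    have hfa : 0 < f a := hf a (mem_insert_self _ _)
    have hfs : ∀ b ∈ s, 0 < f b := fun b hb => hf b (mem_insert_of_mem hb)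
    have ih' := ih hfs
    rw [sum_insert hx, sum_insert hx, card_insert_of_notMem hx]
    have key : ∀ b ∈ s, (2:ℚ) ≤ f b * (f a)⁻¹ + f a * (f b)⁻¹ := by
      intro b hb
      have hfb := hfs b hb
      have h1 : f b * (f a)⁻¹ + f a * (f b)⁻¹ - 2 = (f b - f a)^2 / (f a * f b) := by
        field_simp; ring
      nlinarith [sq_nonneg (f b - f a), mul_pos hfa hfb,
        div_nonneg (sq_nonneg (f b - f a)) (le_of_lt (mul_pos hfa hfb))]
    have hX : (s.card : ℚ) * 2 ≤ (∑ b ∈ s, f b) * (f a)⁻¹ + f a * (∑ b ∈ s, (f b)⁻¹) := by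
      rw [Finset.sum_mul, Finset.mul_sum, ← Finset.sum_add_distrib]
      calc (s.card : ℚ) * 2 = ∑ _b ∈ s, (2:ℚ) := by rw [Finset.sum_const]; push_cast; ring
        _ ≤ _ := Finset.sum_le_sum key
    have hfa' : f a * (f a)⁻¹ = 1 := mul_inv_cancel₀ (ne_of_gt hfa)
    have e1 : (f a + ∑ b ∈ s, f b) * ((f a)⁻¹ + ∑ b ∈ s, (f b)⁻¹)
        = f a * (f a)⁻¹ + ((∑ b ∈ s, f b) * (f a)⁻¹ + f a * (∑ b ∈ s, (f b)⁻¹))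
          + (∑ b ∈ s, f b) * (∑ b ∈ s, (f b)⁻¹) := by ring
    rw [e1, hfa']
    push_cast
    nlinarith [hX, ih']

/-- degree of a vertex in a family of pair-sets -/
private def pdeg (P : Finset (Finset α)) (v : α) : ℕ := (P.filter (fun p => v ∈ p)).card

private lemma pdeg_sum (V : Finset α) (P : Finset (Finset α))
    (hP : ∀ p ∈ P, p ⊆ V ∧ p.card = 2) :
    ∑ v ∈ V, pdeg P v = 2 * P.card := by
  classical
  unfold pdeg
  have h0 : ∑ v ∈ V, (P.filter (fun p => v ∈ p)).card
      = ∑ p ∈ P, (V.filter (fun v => v ∈ p)).card := by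
    simp only [Finset.card_filter]
    rw [Finset.sum_comm]
  rw [h0]
  have h1 : ∀ p ∈ P, (V.filter (fun v => v ∈ p)).card = 2 := by
    intro p hp
    have h1 : V.filter (fun v => v ∈ p) = p := by
      apply Finset.ext
      intro x
      simp only [mem_filter]
      exact ⟨fun h => h.2, fun h => ⟨(hP p hp).1 h, h⟩⟩
    rw [h1, (hP p hp).2]
  rw [Finset.sum_congr rfl h1]
  simp [mul_comm]

/-- Caro–Wei: there is an independent set of size at least ∑ 1/(deg+1). -/
private lemma caro_wei :
    ∀ (n : ℕ) (V : Finset α) (P : Finset (Finset α)), V.card ≤ n →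
    (∀ p ∈ P, p ⊆ V ∧ p.card = 2) →
    ∃ I, I ⊆ V ∧ (∀ p ∈ P, ¬ p ⊆ I) ∧
      (∑ v ∈ V, ((pdeg P v : ℚ) + 1)⁻¹) ≤ I.card := by
  classical
  intro n
  induction n using Nat.strong_induction_on with
  | _ n IH =>
  intro V P hn hP
  rcases V.eq_empty_or_nonempty with hV | hV
  · refine ⟨∅, by simp [hV], ?_, by simp [hV]⟩
    intro p hp hsub
    have h2 := (hP p hp).2
    have : p = ∅ := Finset.subset_empty.mp hsub
    simp [this] at h2
  · obtain ⟨v, hvV, hmin⟩ := Finset.exists_min_image V (pdeg P) hV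
    set δ := pdeg P v with hδ
    set other : Finset α → α := fun p => if h : (p.erase v).Nonempty then (p.erase v).min' h else v with hother
    have hother_mem : ∀ p ∈ P, v ∈ p → other p ∈ p ∧ other p ≠ v := by
      intro p hp hvp
      have h2 := (hP p hp).2
      have hne : (p.erase v).Nonempty := by
        rw [← Finset.card_pos, Finset.card_erase_of_mem hvp, h2]; norm_num
      have hmm : other p ∈ p.erase v := by
        simp only [hother, dif_pos hne]; exact (p.erase v).min'_mem hne
      exact ⟨Finset.mem_of_mem_erase hmm, Finset.ne_of_mem_erase hmm⟩
    set R : Finset α := insert v ((P.filter (fun p => v ∈ p)).image other) with hR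
    have hRcard : R.card ≤ δ + 1 := by
      calc R.card ≤ ((P.filter (fun p => v ∈ p)).image other).card + 1 := Finset.card_insert_le _ _
        _ ≤ δ + 1 := by
            have h6 := Finset.card_image_le (s := P.filter (fun p => v ∈ p)) (f := other)
            have h7 : δ = (P.filter (fun p => v ∈ p)).card := rfl
            omega
    set V' := V \ R with hV'
    set P' := P.filter (fun p => p ⊆ V') with hP'
    have hP'P : P' ⊆ P := Finset.filter_subset _ _
    have hPsub : ∀ p ∈ P', p ⊆ V' ∧ p.card = 2 := by
      intro p hp
      rw [hP', mem_filter] at hp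
      exact ⟨hp.2, (hP p hp.1).2⟩
    have hvR : v ∈ R := mem_insert_self _ _
    have hV'lt : V'.card < n := by
      have : V'.card < V.card := by
        apply Finset.card_lt_card
        constructor
        · exact Finset.sdiff_subset
        · intro hsub
          exact (Finset.mem_sdiff.mp (hsub hvV)).2 hvR
      omega
    obtain ⟨I', hI'V, hI'ind, hI'sum⟩ := IH V'.card hV'lt V' P' le_rfl hPsub
    have hvI' : v ∉ I' := fun h => (Finset.mem_sdiff.mp (hI'V h)).2 hvR
    refine ⟨insert v I', ?_, ?_, ?_⟩
    · intro x hx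
      rcases Finset.mem_insert.mp hx with h | h
      · rwa [h]
      · exact (Finset.mem_sdiff.mp (hI'V h)).1
    · intro p hp hsub
      by_cases hvp : v ∈ p
      · obtain ⟨hom, hone⟩ := hother_mem p hp hvp
        have h3 : other p ∈ insert v I' := hsub hom
        rcases Finset.mem_insert.mp h3 with h | h
        · exact hone h
        · have h4 : other p ∈ V' := hI'V h
          have hoR : other p ∈ R := by
            rw [hR]
            apply Finset.mem_insert_of_mem
            exact Finset.mem_image_of_mem other (mem_filter.mpr ⟨hp, hvp⟩)
          exact (Finset.mem_sdiff.mp h4).2 hoR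
      · have hpI' : p ⊆ I' := by
          intro x hxp
          rcases Finset.mem_insert.mp (hsub hxp) with h | h
          · exact absurd (h ▸ hxp) hvp
          · exact h
        have : p ∈ P' := mem_filter.mpr ⟨hp, hpI'.trans hI'V⟩
        exact hI'ind p this hpI'
    · rw [Finset.card_insert_of_notMem hvI']
      have hsplit : ∑ u ∈ V, ((pdeg P u : ℚ) + 1)⁻¹
          = ∑ u ∈ V ∩ R, ((pdeg P u : ℚ) + 1)⁻¹ + ∑ u ∈ V', ((pdeg P u : ℚ) + 1)⁻¹ := by
        rw [hV', eq_comm]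
        exact Finset.sum_inter_add_sum_sdiff V R _
      rw [hsplit]
      have hb1 : ∑ u ∈ V ∩ R, ((pdeg P u : ℚ) + 1)⁻¹ ≤ 1 := by
        have hterm : ∀ u ∈ V ∩ R, ((pdeg P u : ℚ) + 1)⁻¹ ≤ ((δ:ℚ) + 1)⁻¹ := by
          intro u hu
          have h5 := hmin u (Finset.mem_of_mem_inter_left hu)
          apply inv_anti₀ (by positivity)
          push_cast
          exact_mod_cast Nat.add_le_add_right h5 1
        calc ∑ u ∈ V ∩ R, ((pdeg P u : ℚ) + 1)⁻¹
            ≤ ∑ _u ∈ V ∩ R, ((δ:ℚ) + 1)⁻¹ := Finset.sum_le_sum hterm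
          _ = ((V ∩ R).card : ℚ) * ((δ:ℚ)+1)⁻¹ := by rw [Finset.sum_const]; push_cast; ring
          _ ≤ ((δ:ℚ)+1) * ((δ:ℚ)+1)⁻¹ := by
              apply mul_le_mul_of_nonneg_right _ (by positivity)
              have : (V ∩ R).card ≤ δ + 1 := le_trans (Finset.card_le_card Finset.inter_subset_right) hRcard
              exact_mod_cast this
          _ = 1 := mul_inv_cancel₀ (by positivity)
      have hb2 : ∑ u ∈ V', ((pdeg P u : ℚ) + 1)⁻¹ ≤ I'.card := by
        refine le_trans (Finset.sum_le_sum ?_) hI'sum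
        intro u hu
        apply inv_anti₀ (by positivity)
        have : pdeg P' u ≤ pdeg P u := by
          apply Finset.card_le_card
          exact Finset.filter_subset_filter _ hP'P
        push_cast
        exact_mod_cast Nat.add_le_add_right this 1
      push_cast
      linarith
end CW
section Turan
variable {α : Type*} [DecidableEq α] [LinearOrder α]

private lemma turan_base (V : Finset α) (P : Finset (Finset α)) (k : ℕ)
    (hP : ∀ p ∈ P, p ⊆ V ∧ p.card = 2)
    (hcov : ∀ D, D ⊆ V → D.card = k + 1 → ∃ p ∈ P, p ⊆ D)
    (hkV : k + 1 ≤ V.card) :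
    V.card * (V.card - k) ≤ 2 * k * P.card := by
  classical
  by_contra hcon
  push_neg at hcon
  set n := V.card with hn
  -- n^2 > (2P + n) * k
  have hk2 : (2 * P.card + n) * k < n * n := by
    have h1 : n * n = n * (n - k) + n * k := by
      have : k ≤ n := by omega
      zify [this]; ring
    nlinarith [hcon]
  obtain ⟨I, hIV, hIind, hIsum⟩ := caro_wei n V P le_rfl hP
  have hdegsum : ∑ v ∈ V, ((pdeg P v : ℚ) + 1) = 2 * P.card + n := by
    rw [Finset.sum_add_distrib, Finset.sum_const, ← Nat.cast_sum, pdeg_sum V P hP]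
    push_cast [hn]
    ring
  have hpos : (0:ℚ) < 2 * P.card + n := by
    have : 0 < n := by omega
    positivity
  have hcs := sum_mul_sum_inv V (fun v => (pdeg P v : ℚ) + 1) (fun a _ => by positivity)
  rw [hdegsum] at hcs
  -- sum of inverses > k
  have hsum_gt : (k : ℚ) < ∑ v ∈ V, ((pdeg P v : ℚ) + 1)⁻¹ := by
    by_contra hle
    push_neg at hle
    have h2 : ((n:ℚ))^2 ≤ (2 * P.card + n) * k := le_trans hcs (by
      apply mul_le_mul_of_nonneg_left hle (le_of_lt hpos))
    have h4 : n * n ≤ (2 * P.card + n) * k := by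
      have h5 : ((n * n : ℕ) : ℚ) ≤ (((2 * P.card + n) * k : ℕ) : ℚ) := by push_cast; nlinarith [h2]
      exact_mod_cast h5
    omega
  have hIcard : k + 1 ≤ I.card := by
    have : (k:ℚ) < I.card := lt_of_lt_of_le hsum_gt hIsum
    exact_mod_cast Nat.succ_le_of_lt (by exact_mod_cast this)
  obtain ⟨J, hJI, hJcard⟩ := Finset.exists_subset_card_eq hIcard
  obtain ⟨p, hpP, hpJ⟩ := hcov J (hJI.trans hIV) hJcard
  exact hIind p hpP (hpJ.trans hJI)

/-- extract a 2-element subset from a set of size ≥ 2 -/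
private def pairOf (A : Finset α) : Finset α :=
  if h : A.Nonempty then
    (if h2 : (A.erase (A.min' h)).Nonempty then {A.min' h, (A.erase (A.min' h)).min' h2} else A)
  else A

private lemma pairOf_spec {A : Finset α} (h : 2 ≤ A.card) :
    pairOf A ⊆ A ∧ (pairOf A).card = 2 := by
  have hne : A.Nonempty := Finset.card_pos.mp (by omega)
  have hne2 : (A.erase (A.min' hne)).Nonempty := by
    rw [← Finset.card_pos, Finset.card_erase_of_mem (A.min'_mem hne)]
    omega
  have hmem := (A.erase (A.min' hne)).min'_mem hne2
  unfold pairOf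
  rw [dif_pos hne, dif_pos hne2]
  constructor
  · intro x hx
    rcases Finset.mem_insert.mp hx with h | h
    · rw [h]; exact A.min'_mem hne
    · rw [Finset.mem_singleton.mp h]; exact Finset.mem_of_mem_erase hmem
  · exact Finset.card_pair (Ne.symm (Finset.ne_of_mem_erase hmem))

end Turan
section MainLemma
variable {α : Type*} [DecidableEq α] [LinearOrder α]

/-- The key extremal lemma. -/
private lemma main_lemma :
    ∀ (m d : ℕ) (V τ : Finset α) (H : Finset (Finset α)),
    V.card + τ.card ≤ m → τ ⊆ V →
    (∀ A ∈ H, A ⊆ V ∧ 2 ≤ A.card) →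
    2 ≤ d → 3 * d ≤ V.card + 3 →
    (∀ D, D ⊆ V → D.card = d → 1 + (D ∩ τ).card ≤ (H.filter (fun A => A ⊆ D)).card) →
    V.card * (V.card + d - 1) ≤ 2 * (d - 1) * (H.card + (V \ τ).card) := by
  classical
  intro m
  induction m using Nat.strong_induction_on with
  | _ m IH =>
  intro d V τ H hm hτV hH hd2 hdV hcond
  rcases τ.eq_empty_or_nonempty with hτ | ⟨v, hvτ⟩
  · -- Turán base case
    subst hτ
    set G : Finset (Finset α) := H.image pairOf with hG
    have hGP : ∀ p ∈ G, p ⊆ V ∧ p.card = 2 := by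
      intro p hp
      obtain ⟨A, hA, rfl⟩ := Finset.mem_image.mp hp
      obtain ⟨hAV, hA2⟩ := hH A hA
      obtain ⟨hsub, hcard⟩ := pairOf_spec hA2
      exact ⟨hsub.trans hAV, hcard⟩
    have hdV' : d ≤ V.card := by omega
    have hcov : ∀ D, D ⊆ V → D.card = (d - 1) + 1 → ∃ p ∈ G, p ⊆ D := by
      intro D hDV hDcard
      have hDd : D.card = d := by omega
      have h1 := hcond D hDV hDd
      simp only [Finset.inter_empty, Finset.card_empty, add_zero] at h1
      have : (H.filter (fun A => A ⊆ D)).Nonempty := Finset.card_pos.mp (by omega)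
      obtain ⟨A, hA⟩ := this
      rw [Finset.mem_filter] at hA
      refine ⟨pairOf A, Finset.mem_image_of_mem _ hA.1, ?_⟩
      exact (pairOf_spec (hH A hA.1).2).1.trans hA.2
    have hkV : (d - 1) + 1 ≤ V.card := by omega
    have htb := turan_base V G (d - 1) hGP hcov hkV
    have hGH : G.card ≤ H.card := Finset.card_image_le
    -- V.card * (V.card - (d-1)) ≤ 2 (d-1) H.card ; add 2(d-1) * V.card
    have hVd : d - 1 ≤ V.card := by omega
    simp only [Finset.sdiff_empty]
    -- goal : V.card * (V.card + d - 1) ≤ 2 * (d-1) * (H.card + V.card)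
    have e1 : V.card + d - 1 = (V.card - (d-1)) + 2 * (d-1) := by omega
    rw [e1, Nat.mul_add]
    have : V.card * (V.card - (d-1)) ≤ 2 * (d-1) * H.card := le_trans htb (by
      apply Nat.mul_le_mul_left _ hGH)
    calc V.card * (V.card - (d-1)) + V.card * (2 * (d-1))
        ≤ 2 * (d-1) * H.card + 2 * (d-1) * V.card := by
          refine Nat.add_le_add this (by ring_nf; omega)
      _ = 2 * (d-1) * (H.card + V.card) := by ring
  · -- τ nonempty, v ∈ τ
    have hvV : v ∈ V := hτV hvτ
    by_cases hdeg : ∃ A ∈ H, v ∈ A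
    · -- Case 1 : trade a set containing v for the singleton
      obtain ⟨A, hAH, hvA⟩ := hdeg
      have hm1 : 1 ≤ m := by
        have : 1 ≤ τ.card := Finset.card_pos.mpr ⟨v, hvτ⟩
        omega
      have hrec := IH (m-1) (by omega) d V (τ.erase v) (H.erase A)
        (by
          have h1 : 1 ≤ τ.card := Finset.card_pos.mpr ⟨v, hvτ⟩
          rw [Finset.card_erase_of_mem hvτ]; omega)
        ((Finset.erase_subset _ _).trans hτV)
        (fun B hB => hH B (Finset.mem_of_mem_erase hB))
        hd2 hdV
        (by
          intro D hDV hDd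
          have h1 := hcond D hDV hDd
          rw [Finset.inter_erase, Finset.filter_erase]
          by_cases hvD : v ∈ D
          · have hvDτ : v ∈ D ∩ τ := Finset.mem_inter.mpr ⟨hvD, hvτ⟩
            rw [Finset.card_erase_of_mem hvDτ]
            have h2 := Finset.pred_card_le_card_erase (s := H.filter (fun A => A ⊆ D)) (a := A)
            have h3 : 1 ≤ (D ∩ τ).card := Finset.card_pos.mpr ⟨v, hvDτ⟩
            omega
          · have hAD : A ∉ H.filter (fun A => A ⊆ D) := by
              rw [Finset.mem_filter]
              rintro ⟨-, hAsub⟩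
              exact hvD (hAsub hvA)
            rw [Finset.erase_eq_of_notMem (fun h => hvD (Finset.mem_inter.mp h).1),
              Finset.erase_eq_of_notMem hAD]
            omega)
      have hHc : (H.erase A).card = H.card - 1 := Finset.card_erase_of_mem hAH
      have hsd : V \ (τ.erase v) = insert v (V \ τ) := Finset.sdiff_erase hvV
      have hvVτ : v ∉ V \ τ := fun h => (Finset.mem_sdiff.mp h).2 hvτ
      have hsdc : (V \ (τ.erase v)).card = (V \ τ).card + 1 := by
        rw [hsd, Finset.card_insert_of_notMem hvVτ]
      have h1 : 1 ≤ H.card := Finset.card_pos.mpr ⟨A, hAH⟩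
      rw [hHc, hsdc] at hrec
      have e2 : H.card - 1 + ((V \ τ).card + 1) = H.card + (V \ τ).card := by omega
      rwa [e2] at hrec
    · -- v belongs to no set of H
      push_neg at hdeg
      by_cases hd3 : 3 ≤ d
      · -- Case 2 : remove v, decrease d
        have hVpos : 1 ≤ V.card := Finset.card_pos.mpr ⟨v, hvV⟩
        have hτpos : 1 ≤ τ.card := Finset.card_pos.mpr ⟨v, hvτ⟩
        have hm1 : 1 ≤ m := by omega
        have hrec := IH (m-1) (by omega) (d-1) (V.erase v) (τ.erase v) H
          (by rw [Finset.card_erase_of_mem hvV, Finset.card_erase_of_mem hvτ]; omega)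
          (by
            intro x hx
            rw [Finset.mem_erase] at hx ⊢
            exact ⟨hx.1, hτV hx.2⟩)
          (by
            intro B hB
            refine ⟨?_, (hH B hB).2⟩
            rw [Finset.subset_erase]
            exact ⟨(hH B hB).1, hdeg B hB⟩)
          (by omega)
          (by rw [Finset.card_erase_of_mem hvV]; omega)
          (by
            intro D' hD'V hD'd
            have hvD' : v ∉ D' := fun h => (Finset.mem_erase.mp (hD'V h)).1 rfl
            set D := insert v D' with hD
            have hDV : D ⊆ V := by
              rw [hD, Finset.insert_subset_iff]
              exact ⟨hvV, hD'V.trans (Finset.erase_subset _ _)⟩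
            have hDd : D.card = d := by
              rw [hD, Finset.card_insert_of_notMem hvD', hD'd]; omega
            have h1 := hcond D hDV hDd
            have e3 : D ∩ τ = insert v (D' ∩ τ) := by
              rw [hD, Finset.insert_inter_of_mem hvτ]
            have hvD'τ : v ∉ D' ∩ τ := fun h => hvD' (Finset.mem_inter.mp h).1
            have e4 : (D ∩ τ).card = (D' ∩ τ).card + 1 := by
              rw [e3, Finset.card_insert_of_notMem hvD'τ]
            have e5 : D' ∩ τ.erase v = D' ∩ τ := by
              rw [Finset.inter_erase, Finset.erase_eq_of_notMem hvD'τ]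
            have e6 : H.filter (fun A => A ⊆ D) = H.filter (fun A => A ⊆ D') := by
              apply Finset.filter_congr
              intro B hB
              constructor
              · intro hsub x hx
                rcases Finset.mem_insert.mp (hsub hx) with h | h
                · exact absurd (h ▸ hx) (hdeg B hB)
                · exact h
              · intro hsub
                exact hsub.trans (Finset.subset_insert _ _)
            rw [e5, ← e6]
            omega)
        -- arithmetic transfer
        have hsd2 : (V.erase v) \ (τ.erase v) = V \ τ := by
          ext z
          simp only [Finset.mem_sdiff, Finset.mem_erase]
          constructor
          · rintro ⟨⟨hzv, hzV⟩, hz2⟩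
            refine ⟨hzV, fun hzτ => hz2 ⟨hzv, hzτ⟩⟩
          · rintro ⟨hzV, hzτ⟩
            have hzv : z ≠ v := fun h => hzτ (h ▸ hvτ)
            exact ⟨⟨hzv, hzV⟩, fun h => hzτ h.2⟩
        rw [hsd2, Finset.card_erase_of_mem hvV] at hrec
        -- now : (V.card - 1) * (V.card - 1 + (d-1) - 1) ≤ 2 * (d-1-1) * (H.card + (V\τ).card)
        set n := V.card with hn
        set c := H.card + (V \ τ).card with hc
        have hn3 : 3 * d ≤ n + 3 := hdV
        have key : (d-1) * (d-3) ≤ n * (n - 2*d + 2) := by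
          have h1 : 3 * (d-1) ≤ n := by omega
          have h2 : d - 1 ≤ n - 2*d + 2 := by omega
          calc (d-1) * (d-3) ≤ (3*(d-1)) * (d-1) := by
                apply Nat.mul_le_mul
                · omega
                · omega
            _ ≤ n * (n - 2*d + 2) := Nat.mul_le_mul h1 h2
        -- conclude via integers
        have e7 : n - 1 + (d-1) - 1 = n + d - 3 := by omega
        rw [e7] at hrec
        -- cast to ℤ
        have hd3' : (3:ℤ) ≤ (d:ℤ) := by exact_mod_cast hd3
        have hn' : (3:ℤ) * d ≤ (n:ℤ) + 3 := by exact_mod_cast hn3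
        have hnd : 2*d ≤ n + 2 := by omega
        have hrecZ : ((n:ℤ) - 1) * ((n:ℤ) + d - 3) ≤ 2 * ((d:ℤ) - 2) * c := by
          have := hrec
          zify [show (1:ℕ) ≤ n by omega, show (3:ℕ) ≤ n + d by omega,
            show (1:ℕ) ≤ d by omega, show (2:ℕ) ≤ d - 1 + 1 by omega] at this
          convert this using 2 <;> push_cast <;> omega
        have keyZ : ((d:ℤ) - 1) * ((d:ℤ) - 3) ≤ (n:ℤ) * ((n:ℤ) - 2*d + 2) := by
          have := key
          zify [hnd] at this
          convert this using 2 <;> push_cast <;> omega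
        have goalZ : (n:ℤ) * ((n:ℤ) + d - 1) ≤ 2 * ((d:ℤ) - 1) * c := by
          have hid : ((d:ℤ) - 1) * (((n:ℤ) - 1) * ((n:ℤ) + d - 3)) - ((d:ℤ) - 2) * ((n:ℤ) * ((n:ℤ) + d - 1))
              = (n:ℤ) * ((n:ℤ) - 2*d + 2) - ((d:ℤ) - 1) * ((d:ℤ) - 3) := by ring
          have h8 : ((d:ℤ) - 2) * ((n:ℤ) * ((n:ℤ) + d - 1)) ≤ ((d:ℤ) - 2) * (2 * ((d:ℤ) - 1) * c) := by
            nlinarith [hrecZ, keyZ]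
          have h9 : (0:ℤ) < (d:ℤ) - 2 := by omega
          exact le_of_mul_le_mul_left (by linarith [h8]) h9
        zify [show (1:ℕ) ≤ n + d by omega, show (1:ℕ) ≤ d by omega]
        convert goalZ using 2 <;> push_cast <;> omega
      · -- d = 2 : contradiction
        exfalso
        have hd2' : d = 2 := by omega
        have hV3 : 3 ≤ V.card := by omega
        have : 2 ≤ (V.erase v).card := by
          rw [Finset.card_erase_of_mem hvV]; omega
        obtain ⟨w, hw⟩ := Finset.card_pos.mp (by omega : 0 < (V.erase v).card)
        have hwv : w ≠ v := (Finset.mem_erase.mp hw).1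
        have hwV : w ∈ V := (Finset.mem_erase.mp hw).2
        set D : Finset α := {v, w} with hDdef
        have hDV : D ⊆ V := by
          rw [hDdef, Finset.insert_subset_iff, Finset.singleton_subset_iff]
          exact ⟨hvV, hwV⟩
        have hDc : D.card = d := by
          rw [hDdef, Finset.card_pair (Ne.symm hwv), hd2']
        have h1 := hcond D hDV hDc
        have hvD : v ∈ D ∩ τ := Finset.mem_inter.mpr ⟨Finset.mem_insert_self _ _, hvτ⟩
        have h2 : 1 ≤ (D ∩ τ).card := Finset.card_pos.mpr ⟨v, hvD⟩
        have h3 : (H.filter (fun A => A ⊆ D)).Nonempty := Finset.card_pos.mp (by omega)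
        obtain ⟨A, hA⟩ := h3
        rw [Finset.mem_filter] at hA
        have hA2 : 2 ≤ A.card := (hH A hA.1).2
        have hAD : A = D := by
          apply Finset.eq_of_subset_of_card_le hA.2
          rw [hDc, hd2']; exact hA2
        exact hdeg A hA.1 (hAD ▸ Finset.mem_insert_self v {w})
end MainLemma
open Finset

namespace WP
variable {n : ℕ}

lemma flipAt_same (v : Vtx n) (i : Fin n) : flipAt v i i = !(v i) := by
  unfold flipAt; simp

lemma flipAt_other (v : Vtx n) {i j : Fin n} (h : j ≠ i) : flipAt v i j = v j := by
  unfold flipAt; exact Function.update_of_ne h _ v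

lemma flipAt_flipAt (v : Vtx n) (i : Fin n) : flipAt (flipAt v i) i = v := by
  funext j
  by_cases h : j = i
  · subst h; rw [flipAt_same, flipAt_same, Bool.not_not]
  · rw [flipAt_other _ h, flipAt_other _ h]

lemma flipAt_invol (i : Fin n) : Function.Involutive (fun v : Vtx n => flipAt v i) :=
  fun v => flipAt_flipAt v i

lemma flipAt_inj (i : Fin n) : Function.Injective (fun v : Vtx n => flipAt v i) :=
  (flipAt_invol i).injective

/-- support of a vertex -/
def suppF (v : Vtx n) : Finset (Fin n) := Finset.univ.filter (fun j => v j = true)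

/-- weight of a vertex -/
def wt (v : Vtx n) : ℕ := (suppF v).card

lemma mem_suppF {v : Vtx n} {j : Fin n} : j ∈ suppF v ↔ v j = true := by
  simp [suppF]

lemma suppF_injective : Function.Injective (suppF (n := n)) := by
  intro x y h
  funext j
  have hiff : (x j = true) ↔ (y j = true) := by
    rw [← mem_suppF, ← mem_suppF, h]
  cases hxj : x j <;> cases hyj : y j <;> simp_all

lemma suppF_flipAt {v : Vtx n} {i : Fin n} (h : v i = true) :
    suppF (flipAt v i) = (suppF v).erase i := by
  ext j
  rw [Finset.mem_erase, mem_suppF, mem_suppF]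
  by_cases hj : j = i
  · subst hj
    rw [flipAt_same, h]
    simp
  · rw [flipAt_other _ hj]
    simp [hj]

lemma wt_flipAt {v : Vtx n} {i : Fin n} (h : v i = true) :
    wt (flipAt v i) < wt v := by
  unfold wt
  rw [suppF_flipAt h]
  have hi : i ∈ suppF v := mem_suppF.mpr h
  rw [Finset.card_erase_of_mem hi]
  have : 0 < (suppF v).card := Finset.card_pos.mpr ⟨i, hi⟩
  omega

/-- column membership: agrees with w outside D -/
def colPred (D : Finset (Fin n)) (w v : Vtx n) : Prop := ∀ j ∈ Dᶜ, v j = w j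

instance colPred.dec (D : Finset (Fin n)) (w : Vtx n) : DecidablePred (colPred D w) := by
  intro v; unfold colPred; infer_instance

lemma colPred_flipAt {D : Finset (Fin n)} {w : Vtx n} {i : Fin n} (hi : i ∈ D) (z : Vtx n) :
    colPred D w (flipAt z i) ↔ colPred D w z := by
  unfold colPred
  constructor <;> intro h j hj
  · have hji : j ≠ i := fun he => (Finset.mem_compl.mp hj) (he ▸ hi)
    rw [← flipAt_other z hji]
    exact h j hj
  · have hji : j ≠ i := fun he => (Finset.mem_compl.mp hj) (he ▸ hi)
    rw [flipAt_other z hji]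
    exact h j hj

/-- down-compression in direction i -/
def dc (i : Fin n) (S : Finset (Vtx n)) : Finset (Vtx n) :=
  (S.filter (fun x => x i = false) ∪ S.filter (fun x => x i = true ∧ flipAt x i ∈ S))
    ∪ (S.filter (fun x => x i = true ∧ flipAt x i ∉ S)).image (fun x => flipAt x i)

lemma mem_dc {i : Fin n} {S : Finset (Vtx n)} {z : Vtx n} :
    z ∈ dc i S ↔ (z i = false ∧ (z ∈ S ∨ flipAt z i ∈ S)) ∨ (z i = true ∧ z ∈ S ∧ flipAt z i ∈ S) := by
  unfold dc
  simp only [Finset.mem_union, Finset.mem_filter, Finset.mem_image]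
  constructor
  · rintro ((⟨hz, hzi⟩ | ⟨hz, hzi, hzf⟩) | ⟨x, ⟨hxS, hxi, hxf⟩, rfl⟩)
    · exact Or.inl ⟨hzi, Or.inl hz⟩
    · exact Or.inr ⟨hzi, hz, hzf⟩
    · refine Or.inl ⟨?_, Or.inr ?_⟩
      · rw [flipAt_same, hxi]; rfl
      · rw [flipAt_flipAt]; exact hxS
  · rintro (⟨hzi, hzS | hzf⟩ | ⟨hzi, hzS, hzf⟩)
    · exact Or.inl (Or.inl ⟨hzS, hzi⟩)
    · by_cases hzS : z ∈ S
      · exact Or.inl (Or.inl ⟨hzS, hzi⟩)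
      · refine Or.inr ⟨flipAt z i, ⟨hzf, ?_, ?_⟩, flipAt_flipAt z i⟩
        · rw [flipAt_same, hzi]; rfl
        · rw [flipAt_flipAt]; exact hzS
    · exact Or.inl (Or.inr ⟨hzS, hzi, hzf⟩)

lemma dc_parts_disj1 (i : Fin n) (S : Finset (Vtx n)) :
    Disjoint (S.filter (fun x => x i = false)) (S.filter (fun x => x i = true ∧ flipAt x i ∈ S)) := by
  rw [Finset.disjoint_left]
  intro a ha hb
  rw [Finset.mem_filter] at ha hb
  rw [ha.2] at hb
  exact absurd hb.2.1 (by simp)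

lemma dc_parts_disj2 (i : Fin n) (S : Finset (Vtx n)) :
    Disjoint (S.filter (fun x => x i = false) ∪ S.filter (fun x => x i = true ∧ flipAt x i ∈ S))
      ((S.filter (fun x => x i = true ∧ flipAt x i ∉ S)).image (fun x => flipAt x i)) := by
  rw [Finset.disjoint_left]
  intro a ha hb
  obtain ⟨x, hx, rfl⟩ := Finset.mem_image.mp hb
  rw [Finset.mem_filter] at hx
  rcases Finset.mem_union.mp ha with h | h
  · rw [Finset.mem_filter] at h
    exact hx.2.2 h.1
  · rw [Finset.mem_filter] at h
    rw [flipAt_same, hx.2.1] at h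
    exact absurd h.2.1 (by simp)

lemma card_dc (i : Fin n) (S : Finset (Vtx n)) : (dc i S).card = S.card := by
  unfold dc
  rw [Finset.card_union_of_disjoint (dc_parts_disj2 i S),
    Finset.card_union_of_disjoint (dc_parts_disj1 i S),
    Finset.card_image_of_injective _ (flipAt_inj i)]
  have h1 := Finset.card_filter_add_card_filter_not (s := S) (p := fun x => x i = true)
  simp only [Bool.not_eq_true] at h1
  have h2 := Finset.card_filter_add_card_filter_not
    (s := S.filter (fun x => x i = true)) (p := fun x => flipAt x i ∈ S)
  simp only [Finset.filter_filter] at h2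
  linarith

lemma wsum_dc (i : Fin n) (S : Finset (Vtx n))
    (hmov : ∃ x ∈ S, x i = true ∧ flipAt x i ∉ S) :
    ∑ x ∈ dc i S, wt x < ∑ x ∈ S, wt x := by
  unfold dc
  rw [Finset.sum_union (dc_parts_disj2 i S), Finset.sum_union (dc_parts_disj1 i S),
    Finset.sum_image (fun x _ y _ h => flipAt_inj i h)]
  have h2 := Finset.sum_filter_add_sum_filter_not
    (S.filter (fun x => x i = true)) (fun x => flipAt x i ∈ S) wt
  simp only [Finset.filter_filter] at h2
  have h1 := Finset.sum_filter_add_sum_filter_not S (fun x => x i = true) wt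
  simp only [Bool.not_eq_true] at h1
  have hlt : ∑ x ∈ S.filter (fun x => x i = true ∧ flipAt x i ∉ S), wt (flipAt x i)
      < ∑ x ∈ S.filter (fun x => x i = true ∧ flipAt x i ∉ S), wt x := by
    apply Finset.sum_lt_sum_of_nonempty
    · obtain ⟨x, hx⟩ := hmov
      exact ⟨x, Finset.mem_filter.mpr ⟨hx.1, hx.2⟩⟩
    · intro x hx
      exact wt_flipAt (Finset.mem_filter.mp hx).2.1
  linarith

end WP
namespace WP
variable {n : ℕ}

/-- every d-set of directions has a heavy column -/
def AllBad (d : ℕ) (S : Finset (Vtx n)) : Prop :=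
  ∀ D : Finset (Fin n), D.card = d → ∃ w : Vtx n, d + 2 ≤ (S.filter (colPred D w)).card

lemma allBad_dc {d : ℕ} (i : Fin n) {S : Finset (Vtx n)} (h : AllBad d S) :
    AllBad d (dc i S) := by
  intro D hD
  obtain ⟨w, hw⟩ := h D hD
  by_cases hi : i ∈ D
  · refine ⟨w, ?_⟩
    have he : (dc i S).filter (colPred D w) = dc i (S.filter (colPred D w)) := by
      ext z
      simp only [Finset.mem_filter, mem_dc, colPred_flipAt hi]
      tauto
    rw [he, card_dc]
    exact hw
  · by_cases hwi : w i = true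
    · refine ⟨flipAt w i, le_trans hw ?_⟩
      apply Finset.card_le_card_of_injOn (fun x => flipAt x i)
      · intro x hx
        rw [Finset.mem_coe, Finset.mem_filter] at hx ⊢
        beta_reduce
        obtain ⟨hxS, hxcol⟩ := hx
        have hxi : x i = true := by
          rw [hxcol i (Finset.mem_compl.mpr hi), hwi]
        constructor
        · rw [mem_dc]
          refine Or.inl ⟨?_, Or.inr ?_⟩
          · rw [flipAt_same, hxi]; rfl
          · rw [flipAt_flipAt]; exact hxS
        · intro j hj
          by_cases hji : j = i
          · subst hji; rw [flipAt_same, flipAt_same, hxi, hwi]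
          · rw [flipAt_other _ hji, flipAt_other _ hji]
            exact hxcol j hj
      · intro x _ y _ hxy
        exact flipAt_inj i hxy
    · refine ⟨w, le_trans hw (Finset.card_le_card ?_)⟩
      intro x hx
      rw [Finset.mem_filter] at hx ⊢
      refine ⟨?_, hx.2⟩
      rw [mem_dc]
      have hwi' : w i = false := by
        revert hwi; cases w i <;> simp
      have hxi : x i = false := by
        rw [hx.2 i (Finset.mem_compl.mpr hi), hwi']
      exact Or.inl ⟨hxi, Or.inl hx.1⟩

/-- down-closed set -/
def IsDown (S : Finset (Vtx n)) : Prop :=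
  ∀ x ∈ S, ∀ i : Fin n, x i = true → flipAt x i ∈ S

/-- zero out all coordinates outside D -/
def zOut (D : Finset (Fin n)) (x : Vtx n) : Vtx n := fun j => if j ∈ D then x j else false

lemma zOut_eq_self {D : Finset (Fin n)} {x : Vtx n} (h : suppF x \ D = ∅) : zOut D x = x := by
  funext j
  by_cases hj : j ∈ D
  · simp [zOut, hj]
  · have : x j = false := by
      rcases Bool.eq_false_or_eq_true (x j) with h' | h'
      case inl =>
        exfalso
        have : j ∈ suppF x \ D := Finset.mem_sdiff.mpr ⟨mem_suppF.mpr h', hj⟩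
        rw [h] at this
        exact absurd this (Finset.notMem_empty j)
      case inr => exact h'
    simp [zOut, hj, this]

lemma zOut_mem {S : Finset (Vtx n)} (hdown : IsDown S) (D : Finset (Fin n)) :
    ∀ x ∈ S, zOut D x ∈ S := by
  suffices h : ∀ (k : ℕ) (x : Vtx n), x ∈ S → (suppF x \ D).card ≤ k → zOut D x ∈ S by
    intro x hx
    exact h (suppF x \ D).card x hx le_rfl
  intro k
  induction k with
  | zero =>
    intro x hx hcard
    have hempty : suppF x \ D = ∅ := Finset.card_eq_zero.mp (Nat.le_zero.mp hcard)
    rw [zOut_eq_self hempty]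
    exact hx
  | succ k IH =>
    intro x hx hcard
    rcases Finset.eq_empty_or_nonempty (suppF x \ D) with hempty | ⟨i, hi⟩
    · rw [zOut_eq_self hempty]; exact hx
    · rw [Finset.mem_sdiff, mem_suppF] at hi
      obtain ⟨hxi, hiD⟩ := hi
      have hy : flipAt x i ∈ S := hdown x hx i hxi
      have hsd : suppF (flipAt x i) \ D = (suppF x \ D).erase i := by
        rw [suppF_flipAt hxi]
        ext j
        simp only [Finset.mem_sdiff, Finset.mem_erase]
        tauto
      have hcard' : (suppF (flipAt x i) \ D).card ≤ k := by
        rw [hsd, Finset.card_erase_of_mem (Finset.mem_sdiff.mpr ⟨mem_suppF.mpr hxi, hiD⟩)]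
        omega
      have hmem := IH (flipAt x i) hy hcard'
      have heq : zOut D (flipAt x i) = zOut D x := by
        funext j
        by_cases hj : j ∈ D
        · have hji : j ≠ i := fun he => hiD (he ▸ hj)
          simp [zOut, hj, flipAt_other _ hji]
        · simp [zOut, hj]
      rwa [heq] at hmem

lemma zero_col_ge {S : Finset (Vtx n)} (hdown : IsDown S) (D : Finset (Fin n)) (w : Vtx n) :
    (S.filter (colPred D w)).card ≤ (S.filter (colPred D (fun _ => false))).card := by
  apply Finset.card_le_card_of_injOn (zOut D)
  · intro x hx
    rw [Finset.mem_coe, Finset.mem_filter] at hx ⊢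
    refine ⟨zOut_mem hdown D x hx.1, ?_⟩
    intro j hj
    simp [zOut, Finset.mem_compl.mp hj]
  · intro x hx y hy hxy
    rw [Finset.coe_filter, Set.mem_setOf_eq] at hx hy
    funext j
    by_cases hj : j ∈ D
    · have := congrFun hxy j
      simpa [zOut, hj] using this
    · rw [hx.2 j (Finset.mem_compl.mpr hj), hy.2 j (Finset.mem_compl.mpr hj)]

/-- the "singleton" vertex -/
def eV (i : Fin n) : Vtx n := fun j => decide (j = i)

lemma suppF_eV (i : Fin n) : suppF (eV i) = {i} := by
  ext j
  simp [mem_suppF, eV]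

lemma wt_eV (i : Fin n) : wt (eV i) = 1 := by
  unfold wt
  rw [suppF_eV]
  exact Finset.card_singleton i

lemma eV_inj : Function.Injective (eV (n := n)) := by
  intro i j h
  have h1 := congrFun h i
  unfold eV at h1
  simpa using h1.symm

lemma eq_eV_of_wt_one {x : Vtx n} (h : wt x = 1) : ∃ i, suppF x = {i} ∧ x = eV i := by
  obtain ⟨i, hi⟩ := Finset.card_eq_one.mp h
  refine ⟨i, hi, ?_⟩
  funext j
  by_cases hj : j = i
  · subst hj
    have : j ∈ suppF x := hi ▸ Finset.mem_singleton_self j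
    rw [mem_suppF.mp this]
    simp [eV]
  · have : j ∉ suppF x := by rw [hi]; simp [hj]
    have hxj : x j = false := by
      rcases Bool.eq_false_or_eq_true (x j) with h' | h'
      · exact absurd (mem_suppF.mpr h') this
      · exact h'
    rw [hxj]
    simp [eV, hj]

lemma colzero_iff {D : Finset (Fin n)} {x : Vtx n} :
    colPred D (fun _ => false) x ↔ suppF x ⊆ D := by
  constructor
  · intro h j hj
    by_contra hjD
    have := h j (Finset.mem_compl.mpr hjD)
    rw [mem_suppF.mp hj] at this
    exact absurd this (by simp)
  · intro h j hj
    show x j = false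
    rcases Bool.eq_false_or_eq_true (x j) with h' | h'
    · exact absurd (h (mem_suppF.mpr h')) (fun hm => (Finset.mem_compl.mp hj) hm)
    · exact h'

end WP
namespace WP
variable {n : ℕ}

/-- the singleton-direction set of S -/
def sigmaS (S : Finset (Vtx n)) : Finset (Fin n) := Finset.univ.filter (fun i => eV i ∈ S)

/-- the family of supports of weight-≥2 elements -/
def HS (S : Finset (Vtx n)) : Finset (Finset (Fin n)) :=
  (S.filter (fun x => 2 ≤ wt x)).image suppF

lemma HS_card (S : Finset (Vtx n)) : (HS S).card = (S.filter (fun x => 2 ≤ wt x)).card :=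
  Finset.card_image_of_injective _ suppF_injective

lemma col_count (S : Finset (Vtx n)) (D : Finset (Fin n)) :
    (S.filter (colPred D (fun _ => false))).card
      ≤ 1 + (D ∩ sigmaS S).card + ((HS S).filter (fun A => A ⊆ D)).card := by
  classical
  set T := S.filter (colPred D (fun _ => false)) with hT
  have hmemT : ∀ x ∈ T, x ∈ S ∧ suppF x ⊆ D := by
    intro x hx
    rw [hT, Finset.mem_filter] at hx
    exact ⟨hx.1, colzero_iff.mp hx.2⟩
  have p1 := Finset.card_filter_add_card_filter_not (s := T) (p := fun x => wt x = 0)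
  have p2 := Finset.card_filter_add_card_filter_not
    (s := T.filter (fun x => ¬ wt x = 0)) (p := fun x => wt x = 1)
  simp only [Finset.filter_filter] at p2
  have c0 : (T.filter (fun x => wt x = 0)).card ≤ 1 := by
    apply Finset.card_le_one.mpr
    intro a ha b hb
    rw [Finset.mem_filter] at ha hb
    apply suppF_injective
    rw [Finset.card_eq_zero.mp ha.2, Finset.card_eq_zero.mp hb.2]
  have c1 : (T.filter (fun x => ¬ wt x = 0 ∧ wt x = 1)).card ≤ (D ∩ sigmaS S).card := by
    have himg : (T.filter (fun x => ¬ wt x = 0 ∧ wt x = 1)).image suppF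
        ⊆ (D ∩ sigmaS S).image (fun i => ({i} : Finset (Fin n))) := by
      intro A hA
      obtain ⟨x, hx, rfl⟩ := Finset.mem_image.mp hA
      rw [Finset.mem_filter] at hx
      obtain ⟨i, hsupp, hxe⟩ := eq_eV_of_wt_one hx.2.2
      have hiD : i ∈ D := (hmemT x hx.1).2 (hsupp ▸ Finset.mem_singleton_self i)
      have hiσ : i ∈ sigmaS S := by
        rw [sigmaS, Finset.mem_filter]
        exact ⟨Finset.mem_univ i, hxe ▸ (hmemT x hx.1).1⟩
      rw [hsupp]
      exact Finset.mem_image_of_mem _ (Finset.mem_inter.mpr ⟨hiD, hiσ⟩)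
    calc (T.filter (fun x => ¬ wt x = 0 ∧ wt x = 1)).card
        = ((T.filter (fun x => ¬ wt x = 0 ∧ wt x = 1)).image suppF).card := by
          rw [Finset.card_image_of_injective _ suppF_injective]
      _ ≤ ((D ∩ sigmaS S).image (fun i => ({i} : Finset (Fin n)))).card :=
          Finset.card_le_card himg
      _ ≤ (D ∩ sigmaS S).card := Finset.card_image_le
  have c2 : (T.filter (fun x => ¬ wt x = 0 ∧ ¬ wt x = 1)).card
      ≤ ((HS S).filter (fun A => A ⊆ D)).card := by
    apply Finset.card_le_card_of_injOn suppF
    · intro x hx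
      rw [Finset.mem_coe, Finset.mem_filter] at hx ⊢
      obtain ⟨hxT, hw0, hw1⟩ := hx
      refine ⟨?_, (hmemT x hxT).2⟩
      rw [HS]
      apply Finset.mem_image_of_mem
      rw [Finset.mem_filter]
      exact ⟨(hmemT x hxT).1, by omega⟩
    · intro x _ y _ h
      exact suppF_injective h
  linarith
end WP
namespace WP
variable {n : ℕ}

lemma global_count (S : Finset (Vtx n)) (h0 : (fun _ => false : Vtx n) ∈ S) :
    1 + (sigmaS S).card + (HS S).card ≤ S.card := by
  classical
  have p1 := Finset.card_filter_add_card_filter_not (s := S) (p := fun x => wt x = 0)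
  have p2 := Finset.card_filter_add_card_filter_not
    (s := S.filter (fun x => ¬ wt x = 0)) (p := fun x => wt x = 1)
  simp only [Finset.filter_filter] at p2
  have c0 : 1 ≤ (S.filter (fun x => wt x = 0)).card := by
    apply Finset.card_pos.mpr
    refine ⟨(fun _ => false : Vtx n), Finset.mem_filter.mpr ⟨h0, ?_⟩⟩
    unfold wt
    rw [Finset.card_eq_zero]
    ext j
    simp [mem_suppF]
  have c1 : (sigmaS S).card ≤ (S.filter (fun x => ¬ wt x = 0 ∧ wt x = 1)).card := by
    apply Finset.card_le_card_of_injOn eV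
    · intro i hi
      rw [Finset.mem_coe, sigmaS, Finset.mem_filter] at hi
      rw [Finset.mem_coe, Finset.mem_filter]
      refine ⟨hi.2, ?_, wt_eV i⟩
      rw [wt_eV]
      omega
    · intro i _ j _ h
      exact eV_inj h
  have c2 : (HS S).card ≤ (S.filter (fun x => ¬ wt x = 0 ∧ ¬ wt x = 1)).card := by
    rw [HS_card]
    apply Finset.card_le_card
    intro x hx
    rw [Finset.mem_filter] at hx ⊢
    refine ⟨hx.1, by omega, by omega⟩
  linarith

end WP
namespace WP
variable {n : ℕ}

lemma subcube_eq_colPred {k : ℕ} (D : Finset (Fin n)) (hc : Dᶜ.card = k) (u : Fin k → Bool) :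
    ∃ w : Vtx n, ∀ v : Vtx n, v ∈ subcubeVerts D hc u ↔ colPred D w v := by
  refine ⟨fun j => if h : j ∈ Dᶜ then u ((Dᶜ.orderIsoOfFin hc).symm ⟨j, h⟩) else false, ?_⟩
  intro v
  constructor
  · intro hv j hj
    have h1 : ((Dᶜ.orderIsoOfFin hc) ((Dᶜ.orderIsoOfFin hc).symm ⟨j, hj⟩) : Fin n) = j := by
      rw [OrderIso.apply_symm_apply]
    simp only [dif_pos hj]
    exact ((congrArg v h1).symm).trans (hv _)
  · intro hv i
    have hj : ((Dᶜ.orderIsoOfFin hc i : Fin n)) ∈ Dᶜ := (Dᶜ.orderIsoOfFin hc i).2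
    have h2 := hv _ hj
    simp only [dif_pos hj] at h2
    rw [h2]
    congr 1
    have h3 : (⟨(Dᶜ.orderIsoOfFin hc i : Fin n), hj⟩ : {x // x ∈ Dᶜ}) = Dᶜ.orderIsoOfFin hc i :=
      Subtype.ext rfl
    rw [h3, OrderIso.symm_apply_apply]

lemma ncard_eq_card_filter (S : Finset (Vtx n)) (P : Set (Vtx n)) (D : Finset (Fin n)) (w : Vtx n)
    (h : ∀ v, v ∈ P ↔ colPred D w v) :
    ((S : Set (Vtx n)) ∩ P).ncard = (S.filter (colPred D w)).card := by
  have he : (S : Set (Vtx n)) ∩ P = ↑(S.filter (colPred D w)) := by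
    ext v
    simp only [Set.mem_inter_iff, Finset.coe_filter, Set.mem_setOf_eq, Finset.mem_coe, h v]
  rw [he, Set.ncard_coe_finset]

lemma card_colfilter_le (S : Finset (Vtx n)) (D : Finset (Fin n)) (w : Vtx n) :
    (S.filter (colPred D w)).card ≤ 2 ^ D.card := by
  classical
  have h1 : (S.filter (colPred D w)).card ≤ (Finset.univ : Finset (↥D → Bool)).card := by
    apply Finset.card_le_card_of_injOn (fun v (i : ↥D) => v i.1)
    · intro _ _; exact Finset.mem_univ _
    · intro x hx y hy hxy
      rw [Finset.coe_filter, Set.mem_setOf_eq] at hx hy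
      funext j
      by_cases hj : j ∈ D
      · exact congrFun hxy ⟨j, hj⟩
      · rw [hx.2 j (Finset.mem_compl.mpr hj), hy.2 j (Finset.mem_compl.mpr hj)]
  calc (S.filter (colPred D w)).card ≤ _ := h1
    _ = 2 ^ D.card := by
      rw [Finset.card_univ]
      rw [Fintype.card_fun]
      simp [Fintype.card_coe]

end WP
private lemma arith_d_le_n (n sN d : ℕ) (hs : 2*n ≤ sN) (hn : 1 ≤ n)
    (hd : d = ⌈(n : ℚ)^2 / (2 * (sN : ℚ) - (n : ℚ) - 2)⌉₊) : d ≤ n := by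
  subst hd
  rw [Nat.ceil_le]
  have h1 : (2*(n:ℚ)) ≤ sN := by exact_mod_cast hs
  have h2 : (1:ℚ) ≤ n := by exact_mod_cast hn
  have hden : (0:ℚ) < 2*(sN:ℚ) - n - 2 := by nlinarith
  rw [div_le_iff₀ hden]
  nlinarith

private lemma arith_3d (n sN d : ℕ) (hs : 2*n ≤ sN) (hn : 2 ≤ n)
    (hd : d = ⌈(n : ℚ)^2 / (2 * (sN : ℚ) - (n : ℚ) - 2)⌉₊) : 3*d ≤ n + 3 := by
  have h1 : (2*(n:ℚ)) ≤ sN := by exact_mod_cast hs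
  have h2 : (2:ℚ) ≤ n := by exact_mod_cast hn
  have hden : (0:ℚ) < 2*(sN:ℚ) - n - 2 := by nlinarith
  set m := (n+3)/3 with hm
  have hm1 : n + 1 ≤ 3*m := by omega
  have hm2 : 3*m ≤ n + 3 := by omega
  have hdm : d ≤ m := by
    subst hd
    rw [Nat.ceil_le, div_le_iff₀ hden]
    have hm1' : (n:ℚ) + 1 ≤ 3*(m:ℚ) := by exact_mod_cast hm1
    nlinarith
  omega

private lemma arith_ceil (n sN d : ℕ) (hs : 2*n ≤ sN) (hn : 1 ≤ n) (hd1 : 1 ≤ d)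
    (hd : d = ⌈(n : ℚ)^2 / (2 * (sN : ℚ) - (n : ℚ) - 2)⌉₊) :
    ((d:ℚ) - 1) * (2*(sN:ℚ) - n - 2) < (n:ℚ)^2 := by
  have h1 : (2*(n:ℚ)) ≤ sN := by exact_mod_cast hs
  have h2 : (1:ℚ) ≤ n := by exact_mod_cast hn
  have hden : (0:ℚ) < 2*(sN:ℚ) - n - 2 := by nlinarith
  have hlt : d - 1 < ⌈(n : ℚ)^2 / (2 * (sN : ℚ) - (n : ℚ) - 2)⌉₊ := by
    rw [← hd]; omega
  have := Nat.lt_ceil.mp hlt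
  rw [lt_div_iff₀ hden] at this
  have hc : ((d - 1 : ℕ) : ℚ) = (d:ℚ) - 1 := by
    push_cast [Nat.cast_sub hd1]
    ring
  rw [hc] at this
  exact this

private lemma arith_contra (n sN d Q : ℕ) (hd2 : 2 ≤ d)
    (hQlt : ((d:ℚ) - 1) * (2*(sN:ℚ) - n - 2) < (n:ℚ)^2)
    (hcount : Q + 1 ≤ sN)
    (hmain : n * (n + d - 1) ≤ 2*(d-1)*Q) : False := by
  have h1 : ((n:ℚ)) * ((n:ℚ) + d - 1) ≤ 2*((d:ℚ)-1)*Q := by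
    have hnd : 1 ≤ n + d := by omega
    have h4 : n ≤ n*n + n*d := by nlinarith
    have e1 : n * (n + d - 1) = n*n + n*d - n := by
      zify [hnd, h4]
      ring
    rw [e1] at hmain
    have h5 : 2*Q ≤ 2*d*Q := by nlinarith
    have e2 : 2*(d-1)*Q = 2*d*Q - 2*Q := by
      have hd1 : 1 ≤ d := by omega
      zify [hd1, h5]
      ring
    rw [e2] at hmain
    have h3 : ((n*n + n*d - n : ℕ) : ℚ) ≤ ((2*d*Q - 2*Q : ℕ) : ℚ) := by exact_mod_cast hmain
    push_cast [Nat.cast_sub h4, Nat.cast_sub h5] at h3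
    nlinarith [h3]
  have h2 : ((Q:ℚ)) ≤ (sN:ℚ) - 1 := by
    have : (Q:ℚ) + 1 ≤ sN := by exact_mod_cast hcount
    linarith
  have hd2' : (2:ℚ) ≤ d := by exact_mod_cast hd2
  have h6 : 2*((d:ℚ)-1)*Q ≤ 2*((d:ℚ)-1)*((sN:ℚ)-1) := by nlinarith
  nlinarith [h1, h2, h6, hQlt]
theorem wiener_partition
    (n sN : ℕ) (S : Finset (Vtx n)) (hS : S.card = sN) (hs : 2 * n ≤ sN)
    (d : ℕ) (hd : d = ⌈(n : ℚ)^2 / (2 * (sN : ℚ) - (n : ℚ) - 2)⌉₊) :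
    ∃ (D : Finset (Fin n)) (_ : D.card = d) (hc : Dᶜ.card = n - d),
      ∀ u : Fin (n - d) → Bool,
        ((S : Set (Vtx n)) ∩ subcubeVerts D hc u).ncard ≤ d + 1 := by
  classical
  have hdn : d ≤ n := by
    rcases Nat.eq_zero_or_pos n with hn0 | hn1
    · subst hn0
      have : d = 0 := by rw [hd]; norm_num
      omega
    · exact arith_d_le_n n sN d hs hn1 hd
  by_cases hd1 : d ≤ 1
  · -- trivial case : subcubes have at most 2^d ≤ d+1 vertices
    obtain ⟨D, hDsub, hDcard⟩ := Finset.exists_subset_card_eq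
      (show d ≤ (Finset.univ : Finset (Fin n)).card by simpa using hdn)
    have hc : Dᶜ.card = n - d := by rw [Finset.card_compl, hDcard]; simp
    refine ⟨D, hDcard, hc, ?_⟩
    intro u
    obtain ⟨w, hw⟩ := WP.subcube_eq_colPred D hc u
    rw [WP.ncard_eq_card_filter S _ D w hw]
    calc (S.filter (WP.colPred D w)).card ≤ 2 ^ D.card := WP.card_colfilter_le S D w
      _ ≤ d + 1 := by
          rw [hDcard]
          rcases Nat.le_one_iff_eq_zero_or_eq_one.mp hd1 with h | h <;> subst h <;> norm_num
  · -- main case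
    have hd2 : 2 ≤ d := by omega
    have hn2 : 2 ≤ n := by
      by_contra hcc
      push_neg at hcc
      interval_cases n
      · have : d = 0 := by rw [hd]; norm_num
        omega
      · have : d ≤ 1 := by
          apply arith_d_le_n 1 sN d hs (by norm_num) hd
        omega
    have hn3 := arith_3d n sN d hs hn2 hd
    have hQlt := arith_ceil n sN d hs (by omega) (by omega) hd
    by_contra hcon
    push_neg at hcon
    -- S is "all bad"
    have hAllBad : WP.AllBad d S := by
      intro D hD
      have hc : Dᶜ.card = n - d := by rw [Finset.card_compl, hD]; simp
      obtain ⟨u, hu⟩ := hcon D hD hc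
      obtain ⟨w, hw⟩ := WP.subcube_eq_colPred D hc u
      refine ⟨w, ?_⟩
      rw [← WP.ncard_eq_card_filter S _ D w hw]
      exact hu
    -- pick a weight-minimal all-bad set
    set cand : Finset (Finset (Vtx n)) :=
      Finset.univ.filter (fun T => T.card = sN ∧ WP.AllBad d T) with hcand
    have hScand : S ∈ cand := by
      rw [hcand, Finset.mem_filter]
      exact ⟨Finset.mem_univ _, hS, hAllBad⟩
    obtain ⟨T, hTmem, hTmin⟩ := Finset.exists_min_image cand (fun T => ∑ x ∈ T, WP.wt x) ⟨S, hScand⟩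
    rw [hcand, Finset.mem_filter] at hTmem
    obtain ⟨-, hTcard, hTbad⟩ := hTmem
    -- T is down-closed
    have hdown : WP.IsDown T := by
      intro x hx i hxi
      by_contra hflip
      have h1 := WP.wsum_dc i T ⟨x, hx, hxi, hflip⟩
      have h2 : WP.dc i T ∈ cand := by
        rw [hcand, Finset.mem_filter]
        exact ⟨Finset.mem_univ _, by rw [WP.card_dc]; exact hTcard, WP.allBad_dc i hTbad⟩
      have h3 := hTmin _ h2
      linarith
    -- zero vertex is in T
    have h0T : (fun _ => false : Vtx n) ∈ T := by
      have : T.Nonempty := by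
        rw [← Finset.card_pos, hTcard]
        omega
      obtain ⟨x, hx⟩ := this
      have := WP.zOut_mem hdown ∅ x hx
      have he : WP.zOut ∅ x = (fun _ => false : Vtx n) := by
        funext j
        simp [WP.zOut]
      rwa [he] at this
    -- set up the extremal lemma
    set σ : Finset (Fin n) := WP.sigmaS T with hσ
    set τ : Finset (Fin n) := Finset.univ \ σ with hτ
    set Hf : Finset (Finset (Fin n)) := WP.HS T with hHf
    have huniv : (Finset.univ : Finset (Fin n)).card = n := by simp
    have hcond : ∀ D, D ⊆ Finset.univ → D.card = d →
        1 + (D ∩ τ).card ≤ (Hf.filter (fun A => A ⊆ D)).card := by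
      intro D _ hD
      obtain ⟨w, hw⟩ := hTbad D hD
      have h1 : d + 2 ≤ (T.filter (WP.colPred D (fun _ => false))).card :=
        le_trans hw (WP.zero_col_ge hdown D w)
      have h2 := WP.col_count T D
      have h3 : (D ∩ τ).card = (D \ σ).card := by
        congr 1
        rw [hτ]
        ext j
        simp [Finset.mem_sdiff]
      have h4 := Finset.card_sdiff_add_card_inter D σ
      rw [h3]
      linarith
    have hmain := main_lemma ((Finset.univ : Finset (Fin n)).card + τ.card) d
      Finset.univ τ Hf le_rfl (Finset.subset_univ τ)
      (by
        intro A hA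
        rw [hHf, WP.HS] at hA
        obtain ⟨x, hx, rfl⟩ := Finset.mem_image.mp hA
        exact ⟨Finset.subset_univ _, (Finset.mem_filter.mp hx).2⟩)
      hd2 (by rw [huniv]; exact hn3) hcond
    have hcompl : (Finset.univ : Finset (Fin n)) \ τ = σ := by
      rw [hτ, Finset.sdiff_sdiff_self_left, Finset.univ_inter]
    rw [hcompl, huniv] at hmain
    have hcount := WP.global_count T h0T
    rw [← hσ, ← hHf, hTcard] at hcount
    exact arith_contra n sN d (Hf.card + σ.card) hd2 hQlt (by linarith) hmain
end

section
/- Let n ≥ 2, d ∈ [n], and let Q⁰ and Q¹ be the two (n−1)-dimensional subcubes of Q_n induced by the vertices whose d-th coordinate is 0, respectively 1. Let M be a matching in K(Q_n), write M⁰ = M ∩ E(K(Q⁰)), M¹ = M ∩ E(K(Q¹)), and suppose the remaining edges of M are M² = {u₁v₁, u₂v₂, …, u_k v_k} with k even, k ≥ 2, u_i ∈ V(Q⁰) and v_i ∈ V(Q¹) for all i. Suppose: (i) P⁰ is a perfect matching of the complete graph on {u₁,…,u_k} and C⁰ is a cycle in K(Q⁰) with E(C⁰) = M⁰ ∪ P⁰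 ∪ S⁰ for some S⁰ ⊆ E(Q⁰); (ii) P¹ is a perfect matching of the complete graph on {v₁,…,v_k} such that for every edge v_i v_j ∈ P¹ the vertices u_i and u_j are the two endpoints of a common path component of the graph obtained from C⁰ by deleting the edges of P⁰; (iii) C¹ is a cycle in K(Q¹) with E(C¹) = M¹ ∪ P¹ ∪ S¹ for some S¹ ⊆ E(Q¹). Then there is a cycle C in K(Q_n) such that E(C) = M ∪ S for some S ⊆ E(Q_n) and |V(C)| = |V(C⁰)| + |V(C¹)|. -/
section Aux

variable {V : Type*}

lemma walk_mem_support_of_mem_edges {G : SimpleGraph V} {a b : V} {p : G.Walk a b}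
    {e : Sym2 V} (he : e ∈ p.edges) {x : V} (hx : x ∈ e) : x ∈ p.support := by
  induction e using Sym2.ind with
  | _ y z =>
    rcases Sym2.mem_iff.mp hx with rfl | rfl
    · exact p.fst_mem_support_of_mem_edges he
    · exact p.snd_mem_support_of_mem_edges he

lemma isPath_loop_nil {G : SimpleGraph V} {a : V} {p : G.Walk a a} (hp : p.IsPath) :
    p.Nil := by
  cases p with
  | nil => exact SimpleGraph.Walk.Nil.nil
  | cons h q =>
    rw [SimpleGraph.Walk.cons_isPath_iff] at hp
    exact absurd q.end_mem_support hp.2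

lemma path_edge_end_unique {G : SimpleGraph V} {a b y z : V} (p : G.Walk a b)
    (hp : p.IsPath) (hy : s(y, b) ∈ p.edges) (hz : s(z, b) ∈ p.edges) : y = z := by
  induction p with
  | nil => simp at hy
  | @cons a c b h q ih =>
    rw [SimpleGraph.Walk.cons_isPath_iff] at hp
    rw [SimpleGraph.Walk.edges_cons, List.mem_cons] at hy hz
    have hba : b ≠ a := by
      rintro rfl
      exact hp.2 q.end_mem_support
    have hfirst : ∀ w : V, s(w, b) = s(a, c) → w = a ∧ b = c := by
      intro w hw
      rcases Sym2.eq_iff.mp hw with ⟨h1, h2⟩ | ⟨h1, h2⟩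
      · exact ⟨h1, h2⟩
      · exact absurd h2 hba
    rcases hy with hy | hy <;> rcases hz with hz | hz
    · rw [(hfirst y hy).1, (hfirst z hz).1]
    · obtain ⟨rfl, rfl⟩ := hfirst y hy
      rw [(isPath_loop_nil hp.1).eq_nil] at hz
      simp at hz
    · obtain ⟨rfl, rfl⟩ := hfirst z hz
      rw [(isPath_loop_nil hp.1).eq_nil] at hy
      simp at hy
    · exact ih hp.1 hy hz

lemma path_edge_start_unique {G : SimpleGraph V} {a b y z : V} (p : G.Walk a b)
    (hp : p.IsPath) (hy : s(y, a) ∈ p.edges) (hz : s(z, a) ∈ p.edges) : y = z := by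
  refine path_edge_end_unique p.reverse hp.reverse ?_ ?_ <;>
    rw [SimpleGraph.Walk.edges_reverse, List.mem_reverse] <;> assumption

lemma cycle_local {G : SimpleGraph V} [DecidableEq V] {r x : V} {C : G.Walk r r}
    (hC : C.IsCycle) (hx : x ∈ C.support) :
    ∃ w1 w2 : V, w1 ≠ w2 ∧ s(x, w1) ∈ C.edges ∧ s(x, w2) ∈ C.edges ∧
      ∀ y, s(x, y) ∈ C.edges → y = w1 ∨ y = w2 := by
  have hmem : ∀ e, e ∈ (C.rotate x hx).edges ↔ e ∈ C.edges :=
    fun e => (C.rotate_edges x hx).mem_iff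
  have hC' : (C.rotate x hx).IsCycle := hC.rotate hx
  suffices h : ∃ w1 w2 : V, w1 ≠ w2 ∧ s(x, w1) ∈ (C.rotate x hx).edges ∧
      s(x, w2) ∈ (C.rotate x hx).edges ∧
      ∀ y, s(x, y) ∈ (C.rotate x hx).edges → y = w1 ∨ y = w2 by
    obtain ⟨w1, w2, h1, h2, h3, h4⟩ := h
    exact ⟨w1, w2, h1, (hmem _).mp h2, (hmem _).mp h3,
      fun y hy => h4 y ((hmem _).mpr hy)⟩
  generalize hCC : C.rotate x hx = C' at hC'
  clear hmem hCC hx hC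
  cases C' with
  | nil => exact absurd hC' (SimpleGraph.Walk.IsCycle.not_of_nil)
  | @cons _ w1 _ h q =>
    obtain ⟨hq, hne⟩ := (SimpleGraph.Walk.cons_isCycle_iff q h).mp hC'
    obtain ⟨w2, hadj2, q', hq'⟩ := SimpleGraph.Walk.exists_eq_cons_of_ne h.ne q.reverse
    have hw2 : s(x, w2) ∈ q.edges := by
      rw [← List.mem_reverse, ← SimpleGraph.Walk.edges_reverse, hq',
        SimpleGraph.Walk.edges_cons]
      exact List.mem_cons_self
    have hw1w2 : w1 ≠ w2 := by
      rintro rfl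
      exact hne hw2
    refine ⟨w1, w2, hw1w2, ?_, ?_, ?_⟩
    · rw [SimpleGraph.Walk.edges_cons]; exact List.mem_cons_self
    · rw [SimpleGraph.Walk.edges_cons]; exact List.mem_cons_of_mem _ hw2
    · intro y hy
      rw [SimpleGraph.Walk.edges_cons, List.mem_cons] at hy
      rcases hy with hy | hy
      · rcases Sym2.eq_iff.mp hy with ⟨_, h2⟩ | ⟨h1, _⟩
        · exact Or.inl h2
        · exact absurd h1 h.ne
      · right
        exact path_edge_end_unique q hq (Sym2.eq_swap ▸ hy) (Sym2.eq_swap ▸ hw2)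

lemma exists_cycle_of_conditions [Fintype V] [DecidableEq V]
    (E : Finset (Sym2 V)) (hne : E.Nonempty) (hloop : ∀ e ∈ E, ¬ e.IsDiag)
    (hdeg : ∀ x y, s(x, y) ∈ E → ∃ w1 w2, w1 ≠ w2 ∧ s(x, w1) ∈ E ∧ s(x, w2) ∈ E ∧
      ∀ z, s(x, z) ∈ E → z = w1 ∨ z = w2)
    (hconn : ∀ x y x' y', s(x, y) ∈ E → s(x', y') ∈ E →
      (SimpleGraph.fromEdgeSet (↑E : Set (Sym2 V))).Reachable x x') :
    ∃ (w : V) (C : (SimpleGraph.fromEdgeSet (↑E : Set (Sym2 V))).Walk w w),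
      C.IsCycle ∧ C.edges.toFinset = E := by
  set H := SimpleGraph.fromEdgeSet (↑E : Set (Sym2 V)) with hH
  have hHadj : ∀ {x y : V}, s(x, y) ∈ E → H.Adj x y := by
    intro x y h
    rw [hH, SimpleGraph.fromEdgeSet_adj]
    exact ⟨by exact_mod_cast h, fun hxy => hloop _ h (Sym2.mk_isDiag_iff.mpr hxy)⟩
  have hEadj : ∀ {x y : V}, H.Adj x y → s(x, y) ∈ E := by
    intro x y h
    rw [hH, SimpleGraph.fromEdgeSet_adj] at h
    exact_mod_cast h.1
  set S : Set ℕ := {l | ∃ (a b : V) (p : H.Walk a b), p.IsPath ∧ p.length = l} with hS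
  have hone : (1 : ℕ) ∈ S := by
    obtain ⟨e, he⟩ := hne
    induction e using Sym2.ind with
    | _ x y =>
      have hadj := hHadj he
      refine ⟨x, y, SimpleGraph.Walk.cons hadj SimpleGraph.Walk.nil, ?_, rfl⟩
      rw [SimpleGraph.Walk.cons_isPath_iff]
      exact ⟨SimpleGraph.Walk.IsPath.nil, by simp [hadj.ne]⟩
  have hSbdd : BddAbove S := by
    refine ⟨Fintype.card V, ?_⟩
    rintro l ⟨a, b, p, hp, rfl⟩
    exact hp.length_lt.le
  have hmax := Nat.sSup_mem ⟨1, hone⟩ hSbdd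
  obtain ⟨a, b, p, hp, hplen⟩ := hmax
  have hmaxle : ∀ l ∈ S, l ≤ p.length := fun l hl => hplen ▸ le_csSup hSbdd hl
  have h1le : 1 ≤ p.length := hplen ▸ le_csSup hSbdd hone
  have hnb : ∀ c : V, H.Adj a c → c ∈ p.support := by
    intro c hc
    by_contra hcs
    have hpath : (SimpleGraph.Walk.cons hc.symm p).IsPath :=
      (SimpleGraph.Walk.cons_isPath_iff hc.symm p).mpr ⟨hp, hcs⟩
    have := hmaxle _ ⟨c, b, _, hpath, rfl⟩
    simp [SimpleGraph.Walk.length_cons] at this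
  have hab : a ≠ b := by
    rintro rfl
    have := (isPath_loop_nil hp)
    rw [SimpleGraph.Walk.nil_iff_length_eq] at this
    omega
  obtain ⟨s0, hadj0, q, rfl⟩ := SimpleGraph.Walk.exists_eq_cons_of_ne hab p
  have hfe : s(a, s0) ∈ E := hEadj hadj0
  obtain ⟨w1, w2, hw12, he1, he2, hcompl⟩ := hdeg a s0 hfe
  obtain ⟨c, hcE, hcne⟩ : ∃ c, s(a, c) ∈ E ∧ c ≠ s0 := by
    rcases hcompl s0 hfe with rfl | rfl
    · exact ⟨w2, he2, Ne.symm hw12⟩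
    · exact ⟨w1, he1, hw12⟩
  have hcadj : H.Adj a c := hHadj hcE
  have hcsupp : c ∈ (SimpleGraph.Walk.cons hadj0 q).support := hnb c hcadj
  set q0 := (SimpleGraph.Walk.cons hadj0 q).takeUntil c hcsupp with hq0
  have hq0path : q0.IsPath := hp.takeUntil hcsupp
  have hnotin : s(c, a) ∉ q0.edges := by
    intro hin
    have hin' : s(c, a) ∈ (SimpleGraph.Walk.cons hadj0 q).edges :=
      SimpleGraph.Walk.edges_takeUntil_subset _ hcsupp hin
    have hfirst : s(s0, a) ∈ (SimpleGraph.Walk.cons hadj0 q).edges := by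
      rw [SimpleGraph.Walk.edges_cons, Sym2.eq_swap]
      exact List.mem_cons_self
    exact hcne (path_edge_start_unique _ hp hin' hfirst)
  set CC := SimpleGraph.Walk.cons hcadj.symm q0 with hCCd
  have hCCcyc : CC.IsCycle :=
    (SimpleGraph.Walk.cons_isCycle_iff q0 hcadj.symm).mpr ⟨hq0path, hnotin⟩
  have hCCE : ∀ e ∈ CC.edges, e ∈ E := by
    intro e he
    have := CC.edges_subset_edgeSet he
    rw [hH, SimpleGraph.edgeSet_fromEdgeSet] at this
    exact_mod_cast this.1
  have hclose : ∀ x ∈ CC.support, ∀ z, s(x, z) ∈ E → s(x, z) ∈ CC.edges ∧ z ∈ CC.support := by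
    intro x hx z hz
    obtain ⟨z1, z2, hz12, hz1, hz2, hzc⟩ := cycle_local hCCcyc hx
    obtain ⟨w1', w2', hw', h1', h2', hc'⟩ := hdeg x z1 (hCCE _ hz1)
    have e1 := hc' z1 (hCCE _ hz1)
    have e2 := hc' z2 (hCCE _ hz2)
    have hzmem := hc' z hz
    have hz' : z = z1 ∨ z = z2 := by
      rcases e1 with rfl | rfl <;> rcases e2 with h2 | h2 <;>
        rcases hzmem with rfl | rfl <;> tauto
    have hzin : s(x, z) ∈ CC.edges := by
      rcases hz' with rfl | rfl <;> assumption
    exact ⟨hzin, walk_mem_support_of_mem_edges hzin (Sym2.mem_mk_right _ _)⟩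
  have hreach : ∀ {r t : V} (W : H.Walk r t), r ∈ CC.support → t ∈ CC.support := by
    intro r t W
    induction W with
    | nil => exact id
    | cons hadj W ih => exact fun hr => ih ((hclose _ hr _ (hEadj hadj)).2)
  have hsub : ∀ e ∈ E, e ∈ CC.edges := by
    intro e he
    induction e using Sym2.ind with
    | _ x z =>
      have hca : s(c, a) ∈ E := Sym2.eq_swap ▸ hcE
      have hR : H.Reachable x c := hconn x z c a he hca
      obtain ⟨W⟩ := hR.symm
      have hxsupp : x ∈ CC.support := hreach W CC.start_mem_support
      exact (hclose x hxsupp z he).1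
  refine ⟨c, CC, hCCcyc, ?_⟩
  ext e
  simp only [List.mem_toFinset]
  exact ⟨hCCE e, hsub e⟩

lemma matching_card_eq [DecidableEq V] {k : ℕ} (P : Finset (Sym2 V))
    (w : Fin k → V) (hwinj : Function.Injective w)
    (hloop : ∀ e ∈ P, ¬ e.IsDiag)
    (hdisj : ∀ e ∈ P, ∀ f ∈ P, e ≠ f → ∀ x, x ∈ e → x ∉ f)
    (hverts : ∀ e ∈ P, ∀ x ∈ e, ∃ i, x = w i)
    (hperf : ∀ i, ∃ e ∈ P, w i ∈ e) : 2 * P.card = k := by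
  have huniq : ∀ i : Fin k, ∃! e, e ∈ P ∧ w i ∈ e := by
    intro i
    obtain ⟨e, he, hwe⟩ := hperf i
    refine ⟨e, ⟨he, hwe⟩, ?_⟩
    rintro f ⟨hf, hwf⟩
    by_contra hne
    exact hdisj f hf e he hne _ hwf hwe
  set f : Fin k → Sym2 V := fun i => P.choose _ (huniq i) with hf
  have hf1 : ∀ i, f i ∈ P ∧ w i ∈ f i := fun i => P.choose_spec _ (huniq i)
  have key := Finset.card_eq_sum_card_fiberwise
    (f := f) (s := Finset.univ) (t := P) (fun i _ => (hf1 i).1)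
  have hfiber : ∀ e ∈ P, (Finset.univ.filter fun i => f i = e).card = 2 := by
    intro e he
    induction e using Sym2.ind with
    | _ x y =>
      have hxy : x ≠ y := fun h => hloop _ he (Sym2.mk_isDiag_iff.mpr h)
      obtain ⟨i, rfl⟩ := hverts _ he x (Sym2.mem_mk_left _ _)
      obtain ⟨j, rfl⟩ := hverts _ he y (Sym2.mem_mk_right _ _)
      have hij : i ≠ j := fun h => hxy (by rw [h])
      have hset : (Finset.univ.filter fun m => f m = s(w i, w j)) = {i, j} := by
        ext m
        simp only [Finset.mem_filter, Finset.mem_univ, true_and, Finset.mem_insert,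
          Finset.mem_singleton]
        constructor
        · intro hm
          have := (hf1 m).2
          rw [hm] at this
          rcases Sym2.mem_iff.mp this with h | h
          · exact Or.inl (hwinj h)
          · exact Or.inr (hwinj h)
        · rintro (rfl | rfl)
          · exact (huniq m).unique (hf1 m) ⟨he, Sym2.mem_mk_left _ _⟩
          · exact (huniq m).unique (hf1 m) ⟨he, Sym2.mem_mk_right _ _⟩
      rw [hset, Finset.card_pair hij]
  rw [Finset.sum_congr rfl hfiber, Finset.sum_const, smul_eq_mul] at key
  simpa [mul_comm] using key.symm

end Aux

theorem d_extension_yields_cycle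
    (n : ℕ) (hn : 2 ≤ n) (d : Fin n)
    (M : Finset (Sym2 (Vtx n))) (hM : IsMatchingOn (⊤ : SimpleGraph (Vtx n)) M)
    (M0 M1 : Finset (Sym2 (Vtx n)))
    (hM0 : ∀ e, e ∈ M0 ↔ e ∈ M ∧ ∀ x ∈ e, x d = false)
    (hM1 : ∀ e, e ∈ M1 ↔ e ∈ M ∧ ∀ x ∈ e, x d = true)
    (k : ℕ) (hkeven : Even k) (hk2 : 2 ≤ k)
    (u v : Fin k → Vtx n)
    (hu : ∀ i, u i d = false) (hv : ∀ i, v i d = true)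
    (hinj : Function.Injective (fun i : Fin k => s(u i, v i)))
    (hM2 : M \ (M0 ∪ M1) = Finset.image (fun i : Fin k => s(u i, v i)) Finset.univ)
    -- (i): P⁰ is a perfect matching of the complete graph on {u₁,…,u_k},
    -- and C⁰ is a cycle in K(Q⁰) with E(C⁰) = M⁰ ∪ P⁰ ∪ S⁰, S⁰ ⊆ E(Q⁰)
    (P0 : Finset (Sym2 (Vtx n)))
    (hP0match : IsMatchingOn (⊤ : SimpleGraph (Vtx n)) P0)
    (hP0verts : ∀ e ∈ P0, ∀ x ∈ e, ∃ i, x = u i)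
    (hP0perf : ∀ i, ∃ e ∈ P0, u i ∈ e)
    (x0 : Vtx n) (C0 : (⊤ : SimpleGraph (Vtx n)).Walk x0 x0) (hC0 : C0.IsCycle)
    (hC0verts : ∀ x ∈ C0.support, x d = false)
    (S0 : Finset (Sym2 (Vtx n)))
    (hS0 : ∀ e ∈ S0, e ∈ (cube n).edgeSet ∧ ∀ x ∈ e, x d = false)
    (hC0edges : C0.edges.toFinset = M0 ∪ P0 ∪ S0)
    -- (ii): P¹ is a perfect matching of the complete graph on {v₁,…,v_k} such that
    -- for every edge vᵢvⱼ ∈ P¹, the vertices uᵢ and uⱼ are the two endpoints of a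
    -- common path component of the graph obtained from C⁰ by deleting the edges of P⁰
    (P1 : Finset (Sym2 (Vtx n)))
    (hP1match : IsMatchingOn (⊤ : SimpleGraph (Vtx n)) P1)
    (hP1verts : ∀ e ∈ P1, ∀ x ∈ e, ∃ i, x = v i)
    (hP1perf : ∀ i, ∃ e ∈ P1, v i ∈ e)
    (hP1path : ∀ i j : Fin k, s(v i, v j) ∈ P1 → i ≠ j →
      (∃ p : (⊤ : SimpleGraph (Vtx n)).Walk (u i) (u j), p.IsPath ∧
        ∀ e ∈ p.edges, e ∈ C0.edges ∧ e ∉ P0) ∧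
      (C0.edges.toFinset.filter (fun e => e ∉ P0 ∧ u i ∈ e)).card ≤ 1 ∧
      (C0.edges.toFinset.filter (fun e => e ∉ P0 ∧ u j ∈ e)).card ≤ 1)
    -- (iii): C¹ is a cycle in K(Q¹) with E(C¹) = M¹ ∪ P¹ ∪ S¹, S¹ ⊆ E(Q¹)
    (x1 : Vtx n) (C1 : (⊤ : SimpleGraph (Vtx n)).Walk x1 x1) (hC1 : C1.IsCycle)
    (hC1verts : ∀ x ∈ C1.support, x d = true)
    (S1 : Finset (Sym2 (Vtx n)))
    (hS1 : ∀ e ∈ S1, e ∈ (cube n).edgeSet ∧ ∀ x ∈ e, x d = true)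
    (hC1edges : C1.edges.toFinset = M1 ∪ P1 ∪ S1) :
    ∃ S : Finset (Sym2 (Vtx n)), (∀ e ∈ S, e ∈ (cube n).edgeSet) ∧
      ∃ (w : Vtx n) (C : (⊤ : SimpleGraph (Vtx n)).Walk w w), C.IsCycle ∧
        C.edges.toFinset = M ∪ S ∧ C.length = C0.length + C1.length := by
  classical
  set M2i : Finset (Sym2 (Vtx n)) :=
    Finset.image (fun i : Fin k => s(u i, v i)) Finset.univ with hM2i
  set E : Finset (Sym2 (Vtx n)) :=
    (C0.edges.toFinset \ P0) ∪ (C1.edges.toFinset \ P1) ∪ M2i with hEdef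
  have huv : ∀ i j, u i ≠ v j := by
    intro i j h
    have : (false : Bool) = true := by rw [← hu i, h, hv j]
    simp at this
  have hEmem : ∀ e, e ∈ E ↔ (e ∈ C0.edges.toFinset ∧ e ∉ P0) ∨
      (e ∈ C1.edges.toFinset ∧ e ∉ P1) ∨ ∃ i, e = s(u i, v i) := by
    intro e
    rw [hEdef, hM2i]
    simp only [Finset.mem_union, Finset.mem_sdiff, Finset.mem_image, Finset.mem_univ,
      true_and]
    constructor
    · rintro ((h | h) | ⟨i, rfl⟩)
      · exact Or.inl h
      · exact Or.inr (Or.inl h)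
      · exact Or.inr (Or.inr ⟨i, rfl⟩)
    · rintro (h | h | ⟨i, rfl⟩)
      · exact Or.inl (Or.inl h)
      · exact Or.inl (Or.inr h)
      · exact Or.inr ⟨i, rfl⟩
  have hM2iM : ∀ i : Fin k, s(u i, v i) ∈ M ∧ s(u i, v i) ∉ M0 ∧ s(u i, v i) ∉ M1 := by
    intro i
    have h : s(u i, v i) ∈ M2i := Finset.mem_image_of_mem _ (Finset.mem_univ i)
    rw [← hM2, Finset.mem_sdiff, Finset.mem_union] at h
    exact ⟨h.1, fun h0 => h.2 (Or.inl h0), fun h1 => h.2 (Or.inr h1)⟩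
  have hMuniq : ∀ (i : Fin k) (e), e ∈ M → u i ∈ e → e = s(u i, v i) := by
    intro i e he hue
    by_contra hne
    exact hM.2 e he _ (hM2iM i).1 hne _ hue (Sym2.mem_mk_left _ _)
  have hMuniqv : ∀ (i : Fin k) (e), e ∈ M → v i ∈ e → e = s(u i, v i) := by
    intro i e he hve
    by_contra hne
    exact hM.2 e he _ (hM2iM i).1 hne _ hve (Sym2.mem_mk_right _ _)
  have huinj : ∀ i j : Fin k, u i = u j → i = j := by
    intro i j hij
    have h := hMuniq j (s(u i, v i)) (hM2iM i).1 (by rw [← hij]; exact Sym2.mem_mk_left _ _)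
    exact hinj h
  have hvinj : ∀ i j : Fin k, v i = v j → i = j := by
    intro i j hij
    have h := hMuniqv j (s(u i, v i)) (hM2iM i).1 (by rw [← hij]; exact Sym2.mem_mk_right _ _)
    exact hinj h
  have hC0d : ∀ e ∈ C0.edges, ∀ x ∈ e, x d = false := fun e he x hx =>
    hC0verts x (walk_mem_support_of_mem_edges he hx)
  have hC1d : ∀ e ∈ C1.edges, ∀ x ∈ e, x d = true := fun e he x hx =>
    hC1verts x (walk_mem_support_of_mem_edges he hx)
  have hP0C0 : P0 ⊆ C0.edges.toFinset := by
    intro e he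
    rw [hC0edges]
    exact Finset.mem_union_left _ (Finset.mem_union_right _ he)
  have hP1C1 : P1 ⊆ C1.edges.toFinset := by
    intro e he
    rw [hC1edges]
    exact Finset.mem_union_left _ (Finset.mem_union_right _ he)
  have hus : ∀ i, u i ∈ C0.support := by
    intro i
    obtain ⟨e, he, hue⟩ := hP0perf i
    exact walk_mem_support_of_mem_edges (List.mem_toFinset.mp (hP0C0 he)) hue
  have hvs : ∀ i, v i ∈ C1.support := by
    intro i
    obtain ⟨e, he, hve⟩ := hP1perf i
    exact walk_mem_support_of_mem_edges (List.mem_toFinset.mp (hP1C1 he)) hve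
  have hM0P0 : ∀ e ∈ M0, e ∉ P0 := by
    intro e he hp
    induction e using Sym2.ind with
    | _ x y =>
      obtain ⟨i, rfl⟩ := hP0verts _ hp x (Sym2.mem_mk_left _ _)
      have heM : s(u i, y) ∈ M := ((hM0 _).mp he).1
      have heq := hMuniq i _ heM (Sym2.mem_mk_left _ _)
      have hvd : v i d = false :=
        ((hM0 _).mp he).2 (v i) (by rw [heq]; exact Sym2.mem_mk_right _ _)
      rw [hv i] at hvd
      simp at hvd
  have hM1P1 : ∀ e ∈ M1, e ∉ P1 := by
    intro e he hp
    induction e using Sym2.ind with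
    | _ x y =>
      obtain ⟨i, rfl⟩ := hP1verts _ hp x (Sym2.mem_mk_left _ _)
      have heM : s(v i, y) ∈ M := ((hM1 _).mp he).1
      have heq := hMuniqv i _ heM (Sym2.mem_mk_left _ _)
      have hud : u i d = true :=
        ((hM1 _).mp he).2 (u i) (by rw [heq]; exact Sym2.mem_mk_left _ _)
      rw [hu i] at hud
      simp at hud
  have hMsubE : M ⊆ E := by
    intro e he
    by_cases h0 : e ∈ M0
    · have hh : e ∈ C0.edges.toFinset := by
        rw [hC0edges]
        exact Finset.mem_union_left _ (Finset.mem_union_left _ h0)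
      exact (hEmem e).mpr (Or.inl ⟨hh, hM0P0 _ h0⟩)
    by_cases h1 : e ∈ M1
    · have hh : e ∈ C1.edges.toFinset := by
        rw [hC1edges]
        exact Finset.mem_union_left _ (Finset.mem_union_left _ h1)
      exact (hEmem e).mpr (Or.inr (Or.inl ⟨hh, hM1P1 _ h1⟩))
    · have h : e ∈ M \ (M0 ∪ M1) := Finset.mem_sdiff.mpr ⟨he, by simp [h0, h1]⟩
      rw [hM2] at h
      obtain ⟨i, -, rfl⟩ := Finset.mem_image.mp h
      exact (hEmem _).mpr (Or.inr (Or.inr ⟨i, rfl⟩))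
  have hloopE : ∀ e ∈ E, ¬ e.IsDiag := by
    intro e he
    rcases (hEmem e).mp he with h | h | ⟨i, rfl⟩
    · exact SimpleGraph.not_isDiag_of_mem_edgeSet _
        (C0.edges_subset_edgeSet (List.mem_toFinset.mp h.1))
    · exact SimpleGraph.not_isDiag_of_mem_edgeSet _
        (C1.edges_subset_edgeSet (List.mem_toFinset.mp h.1))
    · rw [Sym2.mk_isDiag_iff]
      exact huv i i
  -- degree condition
  have hdeg : ∀ x y, s(x, y) ∈ E → ∃ w1 w2, w1 ≠ w2 ∧ s(x, w1) ∈ E ∧ s(x, w2) ∈ E ∧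
      ∀ z, s(x, z) ∈ E → z = w1 ∨ z = w2 := by
    intro x y hxy
    by_cases hxd : x d = false
    · by_cases hex : ∃ i, x = u i
      · obtain ⟨i, rfl⟩ := hex
        obtain ⟨z1, z2, hz12, hz1, hz2, hzc⟩ := cycle_local hC0 (hus i)
        obtain ⟨e0, he0P, he0u⟩ := hP0perf i
        have he0C : e0 ∈ C0.edges := List.mem_toFinset.mp (hP0C0 he0P)
        obtain ⟨t, rfl⟩ := Sym2.mem_iff_exists.mp he0u
        obtain ⟨w2, hw2t, hw2C, hw2compl⟩ :
            ∃ w2, w2 ≠ t ∧ s(u i, w2) ∈ C0.edges ∧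
              ∀ y', s(u i, y') ∈ C0.edges → y' = t ∨ y' = w2 := by
          rcases hzc t he0C with rfl | rfl
          · exact ⟨z2, Ne.symm hz12, hz2, hzc⟩
          · exact ⟨z1, fun h => hz12 h, hz1, fun y' hy' => (hzc y' hy').symm⟩
        have hw2P0 : s(u i, w2) ∉ P0 := by
          intro hmem
          have heq : s(u i, w2) = s(u i, t) := by
            by_contra hne
            exact hP0match.2 _ hmem _ he0P hne (u i) (Sym2.mem_mk_left _ _)
              (Sym2.mem_mk_left _ _)
          rcases Sym2.eq_iff.mp heq with ⟨_, h2⟩ | ⟨h1, h2⟩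
          · exact hw2t h2
          · exact (C0.adj_of_mem_edges hw2C).ne h2.symm
        have hw2E : s(u i, w2) ∈ E :=
          (hEmem _).mpr (Or.inl ⟨List.mem_toFinset.mpr hw2C, hw2P0⟩)
        have hviE : s(u i, v i) ∈ E := (hEmem _).mpr (Or.inr (Or.inr ⟨i, rfl⟩))
        have hne2 : v i ≠ w2 := by
          intro h
          have hh := hC0d _ hw2C w2 (Sym2.mem_mk_right _ _)
          rw [← h, hv i] at hh
          simp at hh
        refine ⟨v i, w2, hne2, hviE, hw2E, ?_⟩
        intro z hz
        rcases (hEmem _).mp hz with h | h | ⟨j, hj⟩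
        · rcases hw2compl z (List.mem_toFinset.mp h.1) with rfl | rfl
          · exact absurd he0P h.2
          · exact Or.inr rfl
        · have hh := hC1d _ (List.mem_toFinset.mp h.1) (u i) (Sym2.mem_mk_left _ _)
          rw [hu i] at hh
          simp at hh
        · rcases Sym2.eq_iff.mp hj with ⟨h1, h2⟩ | ⟨h1, h2⟩
          · exact Or.inl (h2.trans (congrArg v (huinj i j h1).symm))
          · exact absurd h1 (huv i j)
      · have hxC0 : s(x, y) ∈ C0.edges ∧ s(x, y) ∉ P0 := by
          rcases (hEmem _).mp hxy with h | h | ⟨j, hj⟩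
          · exact ⟨List.mem_toFinset.mp h.1, h.2⟩
          · have hh := hC1d _ (List.mem_toFinset.mp h.1) x (Sym2.mem_mk_left _ _)
            rw [hxd] at hh
            simp at hh
          · rcases Sym2.eq_iff.mp hj with ⟨h1, _⟩ | ⟨h1, _⟩
            · exact absurd ⟨j, h1⟩ hex
            · rw [h1, hv j] at hxd
              simp at hxd
        have hxs : x ∈ C0.support :=
          walk_mem_support_of_mem_edges hxC0.1 (Sym2.mem_mk_left _ _)
        obtain ⟨z1, z2, hz12, hz1, hz2, hzc⟩ := cycle_local hC0 hxs
        have hnP0 : ∀ e ∈ P0, x ∉ e := fun e he hx => hex (hP0verts e he x hx)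
        refine ⟨z1, z2, hz12,
          (hEmem _).mpr (Or.inl ⟨List.mem_toFinset.mpr hz1,
            fun h => hnP0 _ h (Sym2.mem_mk_left _ _)⟩),
          (hEmem _).mpr (Or.inl ⟨List.mem_toFinset.mpr hz2,
            fun h => hnP0 _ h (Sym2.mem_mk_left _ _)⟩), ?_⟩
        intro z hz
        rcases (hEmem _).mp hz with h | h | ⟨j, hj⟩
        · exact hzc z (List.mem_toFinset.mp h.1)
        · have hh := hC1d _ (List.mem_toFinset.mp h.1) x (Sym2.mem_mk_left _ _)
          rw [hxd] at hh
          simp at hh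
        · rcases Sym2.eq_iff.mp hj with ⟨h1, _⟩ | ⟨h1, _⟩
          · exact absurd ⟨j, h1⟩ hex
          · rw [h1, hv j] at hxd
            simp at hxd
    · have hxd' : x d = true := by simpa using hxd
      by_cases hex : ∃ i, x = v i
      · obtain ⟨i, rfl⟩ := hex
        obtain ⟨z1, z2, hz12, hz1, hz2, hzc⟩ := cycle_local hC1 (hvs i)
        obtain ⟨e0, he0P, he0v⟩ := hP1perf i
        have he0C : e0 ∈ C1.edges := List.mem_toFinset.mp (hP1C1 he0P)
        obtain ⟨t, rfl⟩ := Sym2.mem_iff_exists.mp he0v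
        obtain ⟨w2, hw2t, hw2C, hw2compl⟩ :
            ∃ w2, w2 ≠ t ∧ s(v i, w2) ∈ C1.edges ∧
              ∀ y', s(v i, y') ∈ C1.edges → y' = t ∨ y' = w2 := by
          rcases hzc t he0C with rfl | rfl
          · exact ⟨z2, Ne.symm hz12, hz2, hzc⟩
          · exact ⟨z1, fun h => hz12 h, hz1, fun y' hy' => (hzc y' hy').symm⟩
        have hw2P1 : s(v i, w2) ∉ P1 := by
          intro hmem
          have heq : s(v i, w2) = s(v i, t) := by
            by_contra hne
            exact hP1match.2 _ hmem _ he0P hne (v i) (Sym2.mem_mk_left _ _)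
              (Sym2.mem_mk_left _ _)
          rcases Sym2.eq_iff.mp heq with ⟨_, h2⟩ | ⟨h1, h2⟩
          · exact hw2t h2
          · exact (C1.adj_of_mem_edges hw2C).ne h2.symm
        have hw2E : s(v i, w2) ∈ E :=
          (hEmem _).mpr (Or.inr (Or.inl ⟨List.mem_toFinset.mpr hw2C, hw2P1⟩))
        have huiE : s(v i, u i) ∈ E := by
          rw [Sym2.eq_swap]
          exact (hEmem _).mpr (Or.inr (Or.inr ⟨i, rfl⟩))
        have hne2 : u i ≠ w2 := by
          intro h
          have hh := hC1d _ hw2C w2 (Sym2.mem_mk_right _ _)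
          rw [← h, hu i] at hh
          simp at hh
        refine ⟨u i, w2, hne2, huiE, hw2E, ?_⟩
        intro z hz
        rcases (hEmem _).mp hz with h | h | ⟨j, hj⟩
        · have hh := hC0d _ (List.mem_toFinset.mp h.1) (v i) (Sym2.mem_mk_left _ _)
          rw [hv i] at hh
          simp at hh
        · rcases hw2compl z (List.mem_toFinset.mp h.1) with rfl | rfl
          · exact absurd he0P h.2
          · exact Or.inr rfl
        · rcases Sym2.eq_iff.mp hj with ⟨h1, h2⟩ | ⟨h1, h2⟩
          · exact absurd h1.symm (huv j i)
          · exact Or.inl (h2.trans (congrArg u (hvinj i j h1).symm))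
      · have hxC1 : s(x, y) ∈ C1.edges ∧ s(x, y) ∉ P1 := by
          rcases (hEmem _).mp hxy with h | h | ⟨j, hj⟩
          · have hh := hC0d _ (List.mem_toFinset.mp h.1) x (Sym2.mem_mk_left _ _)
            rw [hxd'] at hh
            simp at hh
          · exact ⟨List.mem_toFinset.mp h.1, h.2⟩
          · rcases Sym2.eq_iff.mp hj with ⟨h1, _⟩ | ⟨h1, _⟩
            · rw [h1, hu j] at hxd'
              simp at hxd'
            · exact absurd ⟨j, h1⟩ hex
        have hxs : x ∈ C1.support :=
          walk_mem_support_of_mem_edges hxC1.1 (Sym2.mem_mk_left _ _)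
        obtain ⟨z1, z2, hz12, hz1, hz2, hzc⟩ := cycle_local hC1 hxs
        have hnP1 : ∀ e ∈ P1, x ∉ e := fun e he hx => hex (hP1verts e he x hx)
        refine ⟨z1, z2, hz12,
          (hEmem _).mpr (Or.inr (Or.inl ⟨List.mem_toFinset.mpr hz1,
            fun h => hnP1 _ h (Sym2.mem_mk_left _ _)⟩)),
          (hEmem _).mpr (Or.inr (Or.inl ⟨List.mem_toFinset.mpr hz2,
            fun h => hnP1 _ h (Sym2.mem_mk_left _ _)⟩)), ?_⟩
        intro z hz
        rcases (hEmem _).mp hz with h | h | ⟨j, hj⟩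
        · have hh := hC0d _ (List.mem_toFinset.mp h.1) x (Sym2.mem_mk_left _ _)
          rw [hxd'] at hh
          simp at hh
        · exact hzc z (List.mem_toFinset.mp h.1)
        · rcases Sym2.eq_iff.mp hj with ⟨h1, _⟩ | ⟨h1, _⟩
          · rw [h1, hu j] at hxd'
            simp at hxd'
          · exact absurd ⟨j, h1⟩ hex
  -- connectivity
  set H := SimpleGraph.fromEdgeSet (↑E : Set (Sym2 (Vtx n))) with hHdef
  have hHadj : ∀ {x y : Vtx n}, s(x, y) ∈ E → H.Adj x y := by
    intro x y h
    rw [hHdef, SimpleGraph.fromEdgeSet_adj]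
    exact ⟨by exact_mod_cast h, fun hxy => hloopE _ h (Sym2.mk_isDiag_iff.mpr hxy)⟩
  have hRuv : ∀ i : Fin k, H.Adj (u i) (v i) := fun i =>
    hHadj ((hEmem _).mpr (Or.inr (Or.inr ⟨i, rfl⟩)))
  have walk1 : ∀ {a b : Vtx n} (W : (⊤ : SimpleGraph (Vtx n)).Walk a b),
      (∀ e ∈ W.edges, e ∈ C1.edges) → H.Reachable a b := by
    intro a b W
    induction W with
    | nil => exact fun _ => SimpleGraph.Reachable.refl _
    | @cons a m b hadj W ih =>
      intro hW
      have he : s(a, m) ∈ C1.edges := hW _ (by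
        rw [SimpleGraph.Walk.edges_cons]; exact List.mem_cons_self)
      have htail : ∀ e ∈ W.edges, e ∈ C1.edges := fun e het => hW e (by
        rw [SimpleGraph.Walk.edges_cons]; exact List.mem_cons_of_mem _ het)
      refine SimpleGraph.Reachable.trans ?_ (ih htail)
      by_cases hp1 : s(a, m) ∈ P1
      · obtain ⟨i, hi⟩ := hP1verts _ hp1 a (Sym2.mem_mk_left _ _)
        obtain ⟨j, hj⟩ := hP1verts _ hp1 m (Sym2.mem_mk_right _ _)
        have hij : i ≠ j := by
          rintro rfl
          exact hadj.ne (hi.trans hj.symm)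
        have hp1' : s(v i, v j) ∈ P1 := by rw [← hi, ← hj]; exact hp1
        obtain ⟨⟨p, hppath, hpe⟩, -, -⟩ := hP1path i j hp1' hij
        have hptrans : ∀ e ∈ p.edges, e ∈ H.edgeSet := by
          intro e hep
          rw [hHdef, SimpleGraph.edgeSet_fromEdgeSet]
          refine ⟨?_, SimpleGraph.not_isDiag_of_mem_edgeSet _ (p.edges_subset_edgeSet hep)⟩
          have h2 := hpe e hep
          exact_mod_cast (hEmem e).mpr (Or.inl ⟨List.mem_toFinset.mpr h2.1, h2.2⟩)
        have hre : H.Reachable (u i) (u j) := ⟨p.transfer H hptrans⟩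
        rw [hi, hj]
        exact ((hRuv i).reachable.symm.trans hre).trans (hRuv j).reachable
      · exact (hHadj ((hEmem _).mpr (Or.inr (Or.inl
          ⟨List.mem_toFinset.mpr he, hp1⟩)))).reachable
  have hR1 : ∀ x, x ∈ C1.support → H.Reachable x1 x := fun x hx =>
    walk1 (C1.takeUntil x hx) (fun e he => C1.edges_takeUntil_subset hx he)
  have walk0 : ∀ {a b : Vtx n} (W : (⊤ : SimpleGraph (Vtx n)).Walk a b),
      (∀ e ∈ W.edges, e ∈ C0.edges) → H.Reachable a b := by
    intro a b W
    induction W with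
    | nil => exact fun _ => SimpleGraph.Reachable.refl _
    | @cons a m b hadj W ih =>
      intro hW
      have he : s(a, m) ∈ C0.edges := hW _ (by
        rw [SimpleGraph.Walk.edges_cons]; exact List.mem_cons_self)
      have htail : ∀ e ∈ W.edges, e ∈ C0.edges := fun e het => hW e (by
        rw [SimpleGraph.Walk.edges_cons]; exact List.mem_cons_of_mem _ het)
      refine SimpleGraph.Reachable.trans ?_ (ih htail)
      by_cases hp0 : s(a, m) ∈ P0
      · obtain ⟨i, hi⟩ := hP0verts _ hp0 a (Sym2.mem_mk_left _ _)
        obtain ⟨j, hj⟩ := hP0verts _ hp0 m (Sym2.mem_mk_right _ _)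
        rw [hi, hj]
        exact (hRuv i).reachable.trans
          (((hR1 _ (hvs i)).symm.trans (hR1 _ (hvs j))).trans (hRuv j).reachable.symm)
      · exact (hHadj ((hEmem _).mpr (Or.inl ⟨List.mem_toFinset.mpr he, hp0⟩))).reachable
  have hR0 : ∀ x, x ∈ C0.support → H.Reachable x0 x := fun x hx =>
    walk0 (C0.takeUntil x hx) (fun e he => C0.edges_takeUntil_subset hx he)
  have i0 : Fin k := ⟨0, by omega⟩
  have hcross : H.Reachable x0 x1 :=
    (hR0 _ (hus i0)).trans ((hRuv i0).reachable.trans ((hR1 _ (hvs i0)).symm))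
  have hbase : ∀ x y, s(x, y) ∈ E → H.Reachable x0 x := by
    intro x y hxy
    rcases (hEmem _).mp hxy with h | h | ⟨j, hj⟩
    · exact hR0 _ (walk_mem_support_of_mem_edges (List.mem_toFinset.mp h.1)
        (Sym2.mem_mk_left _ _))
    · exact hcross.trans (hR1 _ (walk_mem_support_of_mem_edges
        (List.mem_toFinset.mp h.1) (Sym2.mem_mk_left _ _)))
    · rcases Sym2.eq_iff.mp hj with ⟨h1, _⟩ | ⟨h1, _⟩
      · rw [h1]; exact hR0 _ (hus j)
      · rw [h1]; exact hcross.trans (hR1 _ (hvs j))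
  have hconn' : ∀ x y x' y', s(x, y) ∈ E → s(x', y') ∈ E →
      (SimpleGraph.fromEdgeSet (↑E : Set (Sym2 (Vtx n)))).Reachable x x' :=
    fun x y x' y' h h' => (hbase x y h).symm.trans (hbase x' y' h')
  -- extract the cycle
  obtain ⟨w, C, hCcyc, hCE⟩ := exists_cycle_of_conditions E
    ⟨_, (hEmem _).mpr (Or.inr (Or.inr ⟨i0, rfl⟩))⟩ hloopE hdeg hconn'
  have hCedgesE : ∀ e ∈ C.edges, e ∈ (⊤ : SimpleGraph (Vtx n)).edgeSet := by
    intro e he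
    have h := C.edges_subset_edgeSet he
    rw [SimpleGraph.edgeSet_fromEdgeSet] at h
    simpa using h.2
  have hlen0 : C0.edges.toFinset.card = C0.length := by
    rw [List.toFinset_card_of_nodup hC0.isCircuit.isTrail.edges_nodup,
      SimpleGraph.Walk.length_edges]
  have hlen1 : C1.edges.toFinset.card = C1.length := by
    rw [List.toFinset_card_of_nodup hC1.isCircuit.isTrail.edges_nodup,
      SimpleGraph.Walk.length_edges]
  refine ⟨E \ M, ?_, w, C.transfer ⊤ hCedgesE, hCcyc.transfer _, ?_, ?_⟩
  · intro e he
    rw [Finset.mem_sdiff] at he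
    rcases (hEmem _).mp he.1 with h | h | ⟨j, rfl⟩
    · have hh := h.1
      rw [hC0edges] at hh
      rcases Finset.mem_union.mp hh with h' | h'
      · rcases Finset.mem_union.mp h' with h'' | h''
        · exact absurd ((hM0 e).mp h'').1 he.2
        · exact absurd h'' h.2
      · exact (hS0 e h').1
    · have hh := h.1
      rw [hC1edges] at hh
      rcases Finset.mem_union.mp hh with h' | h'
      · rcases Finset.mem_union.mp h' with h'' | h''
        · exact absurd ((hM1 e).mp h'').1 he.2
        · exact absurd h'' h.2
      · exact (hS1 e h').1
    · exact absurd (hM2iM j).1 he.2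
  · rw [SimpleGraph.Walk.edges_transfer, hCE]
    exact (Finset.union_sdiff_of_subset hMsubE).symm
  · have hd12 : Disjoint (C0.edges.toFinset \ P0) (C1.edges.toFinset \ P1) := by
      rw [Finset.disjoint_left]
      intro e he1 he2
      rw [Finset.mem_sdiff] at he1 he2
      induction e using Sym2.ind with
      | _ x y =>
        have h0 := hC0d _ (List.mem_toFinset.mp he1.1) x (Sym2.mem_mk_left _ _)
        have h1 := hC1d _ (List.mem_toFinset.mp he2.1) x (Sym2.mem_mk_left _ _)
        rw [h0] at h1
        simp at h1
    have hdM2 : Disjoint ((C0.edges.toFinset \ P0) ∪ (C1.edges.toFinset \ P1)) M2i := by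
      rw [Finset.disjoint_right]
      intro e heM2 heU
      rw [hM2i] at heM2
      obtain ⟨j, -, rfl⟩ := Finset.mem_image.mp heM2
      rcases Finset.mem_union.mp heU with h | h
      · rw [Finset.mem_sdiff] at h
        have hh := hC0d _ (List.mem_toFinset.mp h.1) (v j) (Sym2.mem_mk_right _ _)
        rw [hv j] at hh
        simp at hh
      · rw [Finset.mem_sdiff] at h
        have hh := hC1d _ (List.mem_toFinset.mp h.1) (u j) (Sym2.mem_mk_left _ _)
        rw [hu j] at hh
        simp at hh
    have hcardE : E.card = (C0.edges.toFinset \ P0).card +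
        (C1.edges.toFinset \ P1).card + k := by
      rw [hEdef, Finset.card_union_of_disjoint hdM2, Finset.card_union_of_disjoint hd12]
      congr 1
      rw [hM2i, Finset.card_image_of_injective _ hinj, Finset.card_univ, Fintype.card_fin]
    have hP0card : 2 * P0.card = k := matching_card_eq P0 u (fun i j h => huinj i j h)
      (fun e he => SimpleGraph.not_isDiag_of_mem_edgeSet _ (hP0match.1 e he))
      hP0match.2 hP0verts hP0perf
    have hP1card : 2 * P1.card = k := matching_card_eq P1 v (fun i j h => hvinj i j h)
      (fun e he => SimpleGraph.not_isDiag_of_mem_edgeSet _ (hP1match.1 e he))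
      hP1match.2 hP1verts hP1perf
    have hc0 : (C0.edges.toFinset \ P0).card = C0.length - P0.card := by
      rw [Finset.card_sdiff_of_subset hP0C0, hlen0]
    have hc1 : (C1.edges.toFinset \ P1).card = C1.length - P1.card := by
      rw [Finset.card_sdiff_of_subset hP1C1, hlen1]
    have hle0 : P0.card ≤ C0.length := hlen0 ▸ Finset.card_le_card hP0C0
    have hle1 : P1.card ≤ C1.length := hlen1 ▸ Finset.card_le_card hP1C1
    have hlenC : (C.transfer ⊤ hCedgesE).length = E.card := by
      rw [← SimpleGraph.Walk.length_edges, ← List.toFinset_card_of_nodup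
        (hCcyc.transfer hCedgesE).isCircuit.isTrail.edges_nodup,
        SimpleGraph.Walk.edges_transfer, hCE]
    rw [hlenC, hcardE, hc0, hc1]
    omega
end
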